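/- arXiv:math/0507320 — 6 statements merged into one kernel-verified Lean document; each statement's English description precedes it below -/
import Mathlib

section
/- Let R be a commutative ring and let M and N be finitely presented R-modules whose supports are disjoint, i.e., Supp(M) ∩ Supp(N) = ∅. Then Ext^i_R(M, N) = 0 for all i ≥ 0. -/
open CategoryTheory Limits Opposite

universe u

/-- **Vanishing of Ext for finitely presented modules with disjoint supports.**
If `R` is a commutative ring and `M`, `N` are finitely presented `R`-modules with
`Supp M ∩ Supp N = ∅`, then `Ext^i_R(M, N) = 0` for all `i ≥ 0`. -/
theorem ext_isZero_of_disjoint_support (R : Type u) [CommRing R]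
    (M N : ModuleCat.{u} R)
    (hM : Module.FinitePresentation R M) (hN : Module.FinitePresentation R N)
    (hsupp : Module.support R M ∩ Module.support R N = ∅) (i : ℕ) :
    IsZero (((Ext R (ModuleCat.{u} R) i).obj (op M)).obj N) := by
  haveI : Module.FinitePresentation R M := hM
  haveI : Module.FinitePresentation R N := hN
  -- the annihilators of `M` and `N` are comaximal
  have hsup : Module.annihilator R M ⊔ Module.annihilator R N = ⊤ := by
    rw [← PrimeSpectrum.zeroLocus_empty_iff_eq_top, PrimeSpectrum.zeroLocus_sup,
      ← Module.support_eq_zeroLocus, ← Module.support_eq_zeroLocus, hsupp]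
  obtain ⟨a, ha, b, hb, hab⟩ :=
    Submodule.mem_sup.mp (hsup ▸ Submodule.mem_top :
      (1 : R) ∈ Module.annihilator R M ⊔ Module.annihilator R N)
  -- a projective resolution of `M`
  let P : ProjectiveResolution M := ProjectiveResolution.of M
  let G := ((linearYoneda R (ModuleCat.{u} R)).obj N).rightOp
  have haM : ∀ (X : ModuleCat.{u} R) (f : X ⟶ M), a • f = 0 := fun X f => by
    ext x
    exact Module.mem_annihilator.mp ha (f x)
  have hbN : ∀ (n : N), b • n = 0 := fun n => Module.mem_annihilator.mp hb n
  have haN : ∀ (X : ModuleCat.{u} R) (f : X ⟶ N), a • f = f := fun X f => by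
    have h0 : b • f = 0 := by ext x; exact hbN (f x)
    have h1 : (a + b) • f = f := by rw [hab, one_smul]
    rwa [add_smul, h0, add_zero] at h1
  -- multiplication by `a` on the resolution lifts `0 : M ⟶ M`, hence is homotopic to `0`
  have hcomm : (a • 𝟙 P.complex) ≫ P.π = 0 := by
    ext j : 1
    rw [HomologicalComplex.comp_f, HomologicalComplex.smul_f_apply, Linear.smul_comp]
    rw [HomologicalComplex.id_f, Category.id_comp]
    exact (haM _ (P.π.f 0)).trans (by simp; rfl)
  let h : Homotopy (a • 𝟙 P.complex) 0 :=
    CategoryTheory.ProjectiveResolution.liftHomotopyZero _ hcomm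
  let L := (G.mapHomologicalComplex (ComplexShape.down ℕ)).obj P.complex
  -- but the functor `Hom(-, N)` sends multiplication by `a` to the identity
  have hmap : (G.mapHomologicalComplex (ComplexShape.down ℕ)).map (a • 𝟙 P.complex) = 𝟙 L := by
    ext j : 1
    apply Quiver.Hom.unop_inj
    simp only [Functor.mapHomologicalComplex_map_f, HomologicalComplex.id_f,
      HomologicalComplex.smul_f_apply, Functor.rightOp_map, unop_op]
    ext f
    change (a • 𝟙 (P.complex.X j)) ≫ f = f
    erw [Linear.smul_comp, Category.id_comp]
    exact congrArg (fun (g : P.complex.X j ⟶ N) => g) (haN _ f)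
  have hzero : IsZero (L.homology i) := by
    rw [IsZero.iff_id_eq_zero, ← HomologicalComplex.homologyMap_id, ← hmap,
      (G.mapHomotopy h).homologyMap_eq i]
    simp
  refine IsZero.of_iso ?_ (P.isoExt i N)
  exact (IsZero.unop hzero).of_iso (HomologicalComplex.homologyUnop L i)
end

section
/- Let R be a commutative ring, and let M_1, M_2, M_1', M_2' be R-modules such that Ext^1_R(M_1', M_2) = 0 and Ext^1_R(M_2', M_1) = 0. Then for every short exact sequence 0 → M_1 ⊕ M_2 → E → M_1' ⊕ M_2' → 0 of R-modules, the middle term E is isomorphic to a direct sum E_1 ⊕ E_2 where E_1 fits in a short exact sequence 0 → M_1 → E_1 → M_1' → 0 and E_2 fits in a short exact sequence 0 → M_2 → E_2 → M_2' → 0. -/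
open CategoryTheory Limits Opposite

universe u

noncomputable section

private lemma splitting_of_isZero_ext {R : Type u} [CommRing R]
    {X Y Z : Type u} [AddCommGroup X] [Module R X] [AddCommGroup Y] [Module R Y]
    [AddCommGroup Z] [Module R Z]
    (hExt : IsZero (((Ext R (ModuleCat.{u} R) 1).obj
      (op (ModuleCat.of R X))).obj (ModuleCat.of R Y)))
    (i : Y →ₗ[R] Z) (p : Z →ₗ[R] X)
    (hi : Function.Injective i) (hp : Function.Surjective p)
    (hip : LinearMap.range i = LinearMap.ker p) :
    ∃ s : X →ₗ[R] Z, ∀ x, p (s x) = x := by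
  classical
  obtain ⟨P⟩ : Nonempty (ProjectiveResolution (ModuleCat.of R X)) :=
    HasProjectiveResolution.out
  let π₀ : P.complex.X 0 ⟶ ModuleCat.of R X := P.π.f 0
  have hπ₀ : Function.Surjective π₀ := by
    rw [← ModuleCat.epi_iff_surjective]
    show Epi (P.π.f 0)
    infer_instance
  let pM : ModuleCat.of R Z ⟶ ModuleCat.of R X := ModuleCat.ofHom p
  have : Epi pM := by rw [ModuleCat.epi_iff_surjective]; exact hp
  let l : P.complex.X 0 ⟶ ModuleCat.of R Z := Projective.factorThru π₀ pM
  have hl : ∀ q, p (l q) = π₀ q := fun q =>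
    congrArg (fun φ => ModuleCat.Hom.hom φ q) (Projective.factorThru_comp π₀ pM)
  have hd₁₀π : ∀ q, π₀ (P.complex.d 1 0 q) = 0 := fun q => by
    rw [show π₀ ((P.complex.d 1 0) q) = (P.complex.d 1 0 ≫ π₀) q from rfl]
    rw [show (P.complex.d 1 0 ≫ π₀) = (0 : P.complex.X 1 ⟶ ModuleCat.of R X) from
      P.complex_d_comp_π_f_zero]
    rfl
  have hmem : ∀ q : P.complex.X 1, l (P.complex.d 1 0 q) ∈ LinearMap.range i := by
    intro q
    rw [hip, LinearMap.mem_ker]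
    exact (hl _).trans (hd₁₀π _)
  -- define the cocycle u : P₁ → Y
  let eY : Y ≃ₗ[R] LinearMap.range i := LinearEquiv.ofInjective i hi
  let lL : ↑(P.complex.X 0) →ₗ[R] Z := l.hom
  let dL : ↑(P.complex.X 1) →ₗ[R] ↑(P.complex.X 0) := (P.complex.d 1 0).hom
  let ld : ↑(P.complex.X 1) →ₗ[R] Z := lL ∘ₗ dL
  have hmem' : ∀ q, ld q ∈ LinearMap.range i := hmem
  let u : ↑(P.complex.X 1) →ₗ[R] Y :=
    eY.symm.toLinearMap ∘ₗ (LinearMap.codRestrict (LinearMap.range i) ld hmem')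
  have hu : ∀ q, i (u q) = l (P.complex.d 1 0 q) := by
    intro q
    have h1 : ((eY (u q)) : Z) = i (u q) := by simp [eY]
    rw [← h1]
    show ((eY (eY.symm (LinearMap.codRestrict (LinearMap.range i) ld hmem' q))) : Z) = _
    rw [LinearEquiv.apply_symm_apply]
    rfl
  have hcocycle : ∀ q : P.complex.X 2, u (P.complex.d 2 1 q) = 0 := by
    intro q
    apply hi
    rw [hu, map_zero]
    rw [show (P.complex.d 1 0) ((P.complex.d 2 1) q)
      = (P.complex.d 2 1 ≫ P.complex.d 1 0) q from rfl]
    rw [P.complex.d_comp_d 2 1 0]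
    exact map_zero _
  -- exactness of the Hom complex in degree 1
  have hz : IsZero ((P.complex.linearYonedaObj R (ModuleCat.of R Y)).homology 1) :=
    hExt.of_iso (P.isoExt 1 (ModuleCat.of R Y)).symm
  have hex := (HomologicalComplex.exactAt_iff_isZero_homology _ 1).2 hz
  rw [HomologicalComplex.exactAt_iff' _ 0 1 2 (by simp) (by simp)] at hex
  rw [ShortComplex.moduleCat_exact_iff] at hex
  have hucocycle : ((P.complex.linearYonedaObj R (ModuleCat.of R Y)).sc' 0 1 2).g
      (ModuleCat.ofHom u) = 0 := by
    show (P.complex.linearYonedaObj R (ModuleCat.of R Y)).d 1 2 (ModuleCat.ofHom u) = 0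
    rw [ChainComplex.linearYonedaObj_d]
    show (P.complex.d 2 1 ≫ ModuleCat.ofHom u : P.complex.X 2 ⟶ ModuleCat.of R Y) = 0
    apply ModuleCat.hom_ext
    apply LinearMap.ext
    intro q
    exact hcocycle q
  obtain ⟨ψ, hψ⟩ := hex (ModuleCat.ofHom u) hucocycle
  let ψ' : P.complex.X 0 ⟶ ModuleCat.of R Y := ψ
  have hψ2 : (P.complex.d 1 0 ≫ ψ' : P.complex.X 1 ⟶ ModuleCat.of R Y)
      = ModuleCat.ofHom u := by
    rw [show ((P.complex.linearYonedaObj R (ModuleCat.of R Y)).sc' 0 1 2).f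
      = (P.complex.linearYonedaObj R (ModuleCat.of R Y)).d 0 1 from rfl,
      ChainComplex.linearYonedaObj_d] at hψ
    exact hψ
  have hψ' : ∀ q, ψ' (P.complex.d 1 0 q) = u q := fun q =>
    congrArg (fun φ => ModuleCat.Hom.hom φ q) hψ2
  -- the corrected lift
  let ψL : ↑(P.complex.X 0) →ₗ[R] Y := ψ'.hom
  let l' : ↑(P.complex.X 0) →ₗ[R] Z := lL - i ∘ₗ ψL
  have hpi : ∀ y, p (i y) = 0 := by
    intro y
    have : i y ∈ LinearMap.ker p := by rw [← hip]; exact ⟨y, rfl⟩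
    exact this
  have hl'p : ∀ q, p (l' q) = π₀ q := by
    intro q
    simp only [l', LinearMap.sub_apply, LinearMap.comp_apply, map_sub, hpi, sub_zero]
    exact hl q
  have hl'd : ∀ q : P.complex.X 1, l' (P.complex.d 1 0 q) = 0 := by
    intro q
    show lL (P.complex.d 1 0 q) - i (ψL (P.complex.d 1 0 q)) = 0
    rw [show ψL (P.complex.d 1 0 q) = u q from hψ' q,
      show lL (P.complex.d 1 0 q) = i (u q) from (hu q).symm, sub_self]
  -- l' kills ker π₀ using exactness of the resolution in degree 0
  have hexact₀ := P.exact₀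
  rw [ShortComplex.moduleCat_exact_iff] at hexact₀
  let π₀L : ↑(P.complex.X 0) →ₗ[R] X := π₀.hom
  have hker : LinearMap.ker π₀L ≤ LinearMap.ker l' := by
    intro q hq
    obtain ⟨q', hq'⟩ := hexact₀ q hq
    rw [LinearMap.mem_ker, ← hq']
    exact hl'd q'
  have hπ₀L : Function.Surjective π₀L := hπ₀
  let eQ : (↑(P.complex.X 0) ⧸ LinearMap.ker π₀L) ≃ₗ[R] X :=
    π₀L.quotKerEquivOfSurjective hπ₀L
  let s : X →ₗ[R] Z := (Submodule.liftQ _ l' hker) ∘ₗ eQ.symm.toLinearMap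
  refine ⟨s, fun x => ?_⟩
  obtain ⟨q, hq⟩ := hπ₀L x
  have heq : eQ.symm x = Submodule.Quotient.mk q := by
    apply eQ.injective
    rw [LinearEquiv.apply_symm_apply]
    rw [show eQ (Submodule.Quotient.mk q) = π₀L q from rfl]
    exact hq.symm
  show p ((Submodule.liftQ _ l' hker) (eQ.symm x)) = x
  rw [heq, Submodule.liftQ_apply, hl'p]
  exact hq


private lemma aux_submodule {R : Type u} [CommRing R]
    {A B A' B' : Type u} [AddCommGroup A] [Module R A] [AddCommGroup B] [Module R B]
    [AddCommGroup A'] [Module R A'] [AddCommGroup B'] [Module R B']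
    (hExt : IsZero (((Ext R (ModuleCat.{u} R) 1).obj
      (op (ModuleCat.of R A'))).obj (ModuleCat.of R B)))
    {E : Type u} [AddCommGroup E] [Module R E]
    (f : (A × B) →ₗ[R] E) (g : E →ₗ[R] (A' × B'))
    (hf : Function.Injective f) (hg : Function.Surjective g)
    (hfg : LinearMap.range f = LinearMap.ker g) :
    ∃ S : Submodule R E,
      (∀ a : A, f (a, 0) ∈ S) ∧
      (∀ e ∈ S, (g e).2 = 0) ∧
      (∀ e ∈ S, (g e).1 = 0 → ∃ a : A, f (a, 0) = e) ∧
      (∀ x : A', ∃ e ∈ S, g e = (x, 0)) := by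
  classical
  have hgf : ∀ x, g (f x) = 0 := fun x => by
    have : f x ∈ LinearMap.ker g := hfg ▸ LinearMap.mem_range_self f x
    exact this
  let gA : E →ₗ[R] A' := (LinearMap.fst R A' B') ∘ₗ g
  let gB : E →ₗ[R] B' := (LinearMap.snd R A' B') ∘ₗ g
  let F : Submodule R E := LinearMap.ker gB
  let N : Submodule R E := LinearMap.range (f ∘ₗ LinearMap.inl R A B)
  have hNmem : ∀ a : A, f (a, 0) ∈ N := fun a => ⟨a, rfl⟩
  have hNF : N ≤ F := by
    rintro _ ⟨a, rfl⟩
    show gB (f ((LinearMap.inl R A B) a)) = 0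
    simp only [gB, LinearMap.comp_apply, LinearMap.inl_apply]
    rw [hgf]
    rfl
  let N' : Submodule R F := N.comap F.subtype
  have hFB : ∀ b : B, f (0, b) ∈ F := fun b => by
    show gB (f (0, b)) = 0
    simp only [gB, LinearMap.comp_apply, hgf]
    rfl
  let iB : B →ₗ[R] (F ⧸ N') :=
    N'.mkQ ∘ₗ (LinearMap.codRestrict F (f ∘ₗ LinearMap.inr R A B) (fun b => hFB b))
  have hkerA : ∀ w : F, (w : E) ∈ N → gA (w : E) = 0 := by
    rintro w ⟨a, ha⟩
    rw [← ha]
    show gA (f (a, 0)) = 0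
    simp only [gA, LinearMap.comp_apply, hgf]
    rfl
  let pA : (F ⧸ N') →ₗ[R] A' := N'.liftQ (gA ∘ₗ F.subtype) (fun w hw => hkerA w hw)
  have hpA_mk : ∀ w : F, pA (N'.mkQ w) = gA (w : E) := fun w => rfl
  have hiB : Function.Injective iB := by
    rw [injective_iff_map_eq_zero]
    intro b hb
    have hb' : N'.mkQ (⟨f (0, b), hFB b⟩ : F) = 0 := hb
    have : (⟨f (0, b), hFB b⟩ : F) ∈ N' := by
      rwa [Submodule.mkQ_apply, Submodule.Quotient.mk_eq_zero] at hb'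
    obtain ⟨a, ha⟩ : f (0, b) ∈ N := this
    have := hf ha
    have h2 := congrArg Prod.snd this
    simpa using h2.symm
  have hpAs : Function.Surjective pA := by
    intro a
    obtain ⟨e, he⟩ := hg (a, 0)
    have heF : e ∈ F := by show gB e = 0; simp [gB, he]
    exact ⟨N'.mkQ ⟨e, heF⟩, by rw [hpA_mk]; show gA e = a; simp [gA, he]⟩
  have hrk : LinearMap.range iB = LinearMap.ker pA := by
    ext q
    constructor
    · rintro ⟨b, rfl⟩
      show pA (N'.mkQ _) = 0
      rw [hpA_mk]
      show gA (f (0, b)) = 0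
      simp only [gA, LinearMap.comp_apply, hgf]
      rfl
    · intro hq
      obtain ⟨w, rfl⟩ := N'.mkQ_surjective q
      have h1 : gA (w : E) = 0 := hq
      have h2 : gB (w : E) = 0 := w.2
      have h3 : g (w : E) = 0 := Prod.ext h1 h2
      have : (w : E) ∈ LinearMap.range f := hfg ▸ h3
      obtain ⟨⟨x, y⟩, hxy⟩ := this
      refine ⟨y, ?_⟩
      show N'.mkQ ⟨f (0, y), hFB y⟩ = N'.mkQ w
      rw [Submodule.mkQ_apply, Submodule.mkQ_apply, Submodule.Quotient.eq]
      show (⟨f (0, y), hFB y⟩ : F) - w ∈ N'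
      show f (0, y) - (w : E) ∈ N
      rw [← hxy, show f (0, y) - f (x, y) = -(f (x, 0)) by
        rw [← map_sub, ← map_neg]; congr 1; simp]
      exact neg_mem (hNmem x)
  obtain ⟨s, hs⟩ := splitting_of_isZero_ext hExt iB pA hiB hpAs hrk
  refine ⟨Submodule.map F.subtype ((LinearMap.range s).comap N'.mkQ), ?_, ?_, ?_, ?_⟩
  · intro a
    refine ⟨⟨f (a, 0), hNF (hNmem a)⟩, ?_, rfl⟩
    show N'.mkQ _ ∈ LinearMap.range s
    have : N'.mkQ (⟨f (a, 0), hNF (hNmem a)⟩ : F) = 0 := by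
      rw [Submodule.mkQ_apply, Submodule.Quotient.mk_eq_zero]
      exact hNmem a
    rw [this]
    exact ⟨0, map_zero s⟩
  · intro e he
    obtain ⟨w, hw, rfl⟩ := Submodule.mem_map.1 he
    exact w.2
  · intro e he h1
    obtain ⟨w, hw, rfl⟩ := Submodule.mem_map.1 he
    obtain ⟨a', ha'⟩ := hw
    have ha0 : a' = 0 := by
      have h2 := hs a'
      rw [ha', hpA_mk] at h2
      rw [← h2]
      exact h1
    have hmk0 : N'.mkQ w = 0 := by rw [← ha', ha0, map_zero]
    have hwN : (w : E) ∈ N := by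
      rwa [Submodule.mkQ_apply, Submodule.Quotient.mk_eq_zero] at hmk0
    obtain ⟨a, ha⟩ := hwN
    exact ⟨a, ha⟩
  · intro x
    obtain ⟨w, hw⟩ := N'.mkQ_surjective (s x)
    refine ⟨(w : E), Submodule.mem_map.2 ⟨w, ⟨x, hw.symm⟩, rfl⟩, ?_⟩
    have h1 : (g (w : E)).1 = x := by
      have h2 := hs x
      rw [← hw, hpA_mk] at h2
      exact h2

    exact Prod.ext h1 w.2

/-- **Extensions of direct sums split along vanishing Ext¹.**
Let `R` be a commutative ring and `M₁, M₂, M₁', M₂'` be `R`-modules with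
`Ext¹_R(M₁', M₂) = 0` and `Ext¹_R(M₂', M₁) = 0`. Then for every short exact sequence
`0 → M₁ ⊕ M₂ → E → M₁' ⊕ M₂' → 0`, the middle term `E` is isomorphic to a direct sum
`E₁ ⊕ E₂`, where `E₁` fits in a short exact sequence `0 → M₁ → E₁ → M₁' → 0` and
`E₂` fits in a short exact sequence `0 → M₂ → E₂ → M₂' → 0`. -/
theorem extension_of_directSum_splits (R : Type u) [CommRing R]
    (M₁ M₂ M₁' M₂' : Type u)
    [AddCommGroup M₁] [Module R M₁] [AddCommGroup M₂] [Module R M₂]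
    [AddCommGroup M₁'] [Module R M₁'] [AddCommGroup M₂'] [Module R M₂']
    (hExt₁ : IsZero (((Ext R (ModuleCat.{u} R) 1).obj
      (op (ModuleCat.of R M₁'))).obj (ModuleCat.of R M₂)))
    (hExt₂ : IsZero (((Ext R (ModuleCat.{u} R) 1).obj
      (op (ModuleCat.of R M₂'))).obj (ModuleCat.of R M₁)))
    (E : Type u) [AddCommGroup E] [Module R E]
    (f : (M₁ × M₂) →ₗ[R] E) (g : E →ₗ[R] (M₁' × M₂'))
    (hf : Function.Injective f) (hg : Function.Surjective g)
    (hfg : LinearMap.range f = LinearMap.ker g) :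
    ∃ (E₁ E₂ : ModuleCat.{u} R)
      (f₁ : ModuleCat.of R M₁ ⟶ E₁) (g₁ : E₁ ⟶ ModuleCat.of R M₁')
      (f₂ : ModuleCat.of R M₂ ⟶ E₂) (g₂ : E₂ ⟶ ModuleCat.of R M₂'),
      Function.Injective f₁ ∧ Function.Surjective g₁ ∧
        LinearMap.range f₁.hom = LinearMap.ker g₁.hom ∧
      Function.Injective f₂ ∧ Function.Surjective g₂ ∧
        LinearMap.range f₂.hom = LinearMap.ker g₂.hom ∧
      Nonempty (E ≃ₗ[R] E₁ × E₂) := by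
  classical
  have hgf : ∀ x, g (f x) = 0 := fun x => by
    have : f x ∈ LinearMap.ker g := hfg ▸ LinearMap.mem_range_self f x
    exact this
  obtain ⟨S₁, hS₁a, hS₁b, hS₁c, hS₁d⟩ := aux_submodule hExt₁ f g hf hg hfg
  -- the swapped short exact sequence
  let σ : (M₂ × M₁) →ₗ[R] (M₁ × M₂) := (LinearEquiv.prodComm R M₂ M₁).toLinearMap
  let τ : (M₁' × M₂') →ₗ[R] (M₂' × M₁') := (LinearEquiv.prodComm R M₁' M₂').toLinearMap
  let f' : (M₂ × M₁) →ₗ[R] E := f ∘ₗ σ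
  let g' : E →ₗ[R] (M₂' × M₁') := τ ∘ₗ g
  have hf' : Function.Injective f' := hf.comp (LinearEquiv.prodComm R M₂ M₁).injective
  have hg' : Function.Surjective g' :=
    (LinearEquiv.prodComm R M₁' M₂').surjective.comp hg
  have hfg' : LinearMap.range f' = LinearMap.ker g' := by
    ext e
    have h1 : e ∈ LinearMap.range f' ↔ e ∈ LinearMap.range f := by
      constructor
      · rintro ⟨x, rfl⟩; exact ⟨σ x, rfl⟩
      · rintro ⟨x, rfl⟩; exact ⟨(x.2, x.1), rfl⟩
    have h2 : e ∈ LinearMap.ker g' ↔ e ∈ LinearMap.ker g := by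
      constructor
      · intro h
        exact (LinearEquiv.prodComm R M₁' M₂').injective (by rw [map_zero]; exact h)
      · intro h
        show τ (g e) = 0
        rw [show g e = 0 from h, map_zero]
    rw [h1, hfg]
    exact h2.symm
  obtain ⟨S₂, hS₂a, hS₂b, hS₂c, hS₂d⟩ := aux_submodule hExt₂ f' g' hf' hg' hfg'
  have hS₂a' : ∀ b : M₂, f (0, b) ∈ S₂ := fun b => hS₂a b
  have hS₂b' : ∀ e ∈ S₂, (g e).1 = 0 := fun e he => hS₂b e he
  have hS₂c' : ∀ e ∈ S₂, (g e).2 = 0 → ∃ b : M₂, f (0, b) = e := fun e he h =>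
    hS₂c e he h
  have hS₂d' : ∀ y : M₂', ∃ e ∈ S₂, g e = (0, y) := by
    intro y
    obtain ⟨e, he, hge⟩ := hS₂d y
    exact ⟨e, he, Prod.ext (congrArg Prod.snd hge) (congrArg Prod.fst hge)⟩
  -- the maps
  let f₁L : M₁ →ₗ[R] S₁ :=
    LinearMap.codRestrict S₁ (f ∘ₗ LinearMap.inl R M₁ M₂) (fun a => hS₁a a)
  let g₁L : S₁ →ₗ[R] M₁' := (LinearMap.fst R M₁' M₂') ∘ₗ g ∘ₗ S₁.subtype
  let f₂L : M₂ →ₗ[R] S₂ :=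
    LinearMap.codRestrict S₂ (f ∘ₗ LinearMap.inr R M₁ M₂) (fun b => hS₂a' b)
  let g₂L : S₂ →ₗ[R] M₂' := (LinearMap.snd R M₁' M₂') ∘ₗ g ∘ₗ S₂.subtype
  have hinj₁ : Function.Injective f₁L := by
    intro a a' h
    have h1 : f ((LinearMap.inl R M₁ M₂) a) = f ((LinearMap.inl R M₁ M₂) a') :=
      congrArg Subtype.val h
    exact congrArg Prod.fst (hf h1)
  have hsurj₁ : Function.Surjective g₁L := by
    intro x
    obtain ⟨e, he, hge⟩ := hS₁d x
    exact ⟨⟨e, he⟩, congrArg Prod.fst hge⟩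
  have hrk₁ : LinearMap.range f₁L = LinearMap.ker g₁L := by
    ext w
    constructor
    · rintro ⟨a, rfl⟩
      show (g (f ((LinearMap.inl R M₁ M₂) a))).1 = 0
      rw [hgf]
      rfl
    · intro hw
      obtain ⟨a, ha⟩ := hS₁c (w : E) w.2 hw
      exact ⟨a, Subtype.ext ha⟩
  have hinj₂ : Function.Injective f₂L := by
    intro b b' h
    have h1 : f ((LinearMap.inr R M₁ M₂) b) = f ((LinearMap.inr R M₁ M₂) b') :=
      congrArg Subtype.val h
    exact congrArg Prod.snd (hf h1)
  have hsurj₂ : Function.Surjective g₂L := by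
    intro y
    obtain ⟨e, he, hge⟩ := hS₂d' y
    exact ⟨⟨e, he⟩, congrArg Prod.snd hge⟩
  have hrk₂ : LinearMap.range f₂L = LinearMap.ker g₂L := by
    ext w
    constructor
    · rintro ⟨b, rfl⟩
      show (g (f ((LinearMap.inr R M₁ M₂) b))).2 = 0
      rw [hgf]
      rfl
    · intro hw
      obtain ⟨b, hb⟩ := hS₂c' (w : E) w.2 hw
      exact ⟨b, Subtype.ext hb⟩
  -- the internal direct sum decomposition
  have hdis : Disjoint S₁ S₂ := by
    rw [Submodule.disjoint_def]
    intro e he1 he2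
    obtain ⟨a, ha⟩ := hS₁c e he1 (hS₂b' e he2)
    obtain ⟨b, hb⟩ := hS₂c' e he2 (hS₁b e he1)
    have hab : (a, (0 : M₂)) = ((0 : M₁), b) := hf (ha.trans hb.symm)
    have ha0 : a = 0 := congrArg Prod.fst hab
    rw [← ha, ha0]
    rw [show ((0 : M₁), (0 : M₂)) = (0 : M₁ × M₂) from rfl, map_zero]
  have hcod : Codisjoint S₁ S₂ := by
    rw [codisjoint_iff, eq_top_iff]
    intro e _
    obtain ⟨e₁, he₁, hge₁⟩ := hS₁d (g e).1
    obtain ⟨e₂, he₂, hge₂⟩ := hS₂d' (g e).2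
    have h0 : g (e - e₁ - e₂) = 0 := by
      rw [map_sub, map_sub, hge₁, hge₂]
      apply Prod.ext <;> simp
    have hker : e - e₁ - e₂ ∈ LinearMap.ker g := h0
    rw [← hfg] at hker
    obtain ⟨⟨x, y⟩, hxy⟩ := hker
    refine Submodule.mem_sup.2 ⟨e₁ + f (x, 0), S₁.add_mem he₁ (hS₁a x),
      e₂ + f (0, y), S₂.add_mem he₂ (hS₂a' y), ?_⟩
    have hx : f (x, y) = e - e₁ - e₂ := hxy
    have hsum : f (x, 0) + f (0, y) = f (x, y) := by
      rw [← map_add]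
      congr 1
      simp
    calc e₁ + f (x, 0) + (e₂ + f (0, y))
        = (f (x, 0) + f (0, y)) + e₁ + e₂ := by abel
      _ = (e - e₁ - e₂) + e₁ + e₂ := by rw [hsum, hx]
      _ = e := by abel
  have hcompl : IsCompl S₁ S₂ := ⟨hdis, hcod⟩
  exact ⟨ModuleCat.of R S₁, ModuleCat.of R S₂, ModuleCat.ofHom f₁L, ModuleCat.ofHom g₁L,
    ModuleCat.ofHom f₂L, ModuleCat.ofHom g₂L,
    hinj₁, hsurj₁, hrk₁, hinj₂, hsurj₂, hrk₂,
    ⟨(Submodule.prodEquivOfIsCompl S₁ S₂ hcompl).symm⟩⟩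
end
end

section
/- Let R be a commutative regular coherent ring, and let W_1 and W_2 be wide subcategories of the category of finitely presented R-modules such that every module belonging to both W_1 and W_2 is the zero module. Then the full subcategory W_1 ⊔ W_2, whose objects are the R-modules isomorphic to M_1 ⊕ M_2 with M_1 in W_1 and M_2 in W_2, is again a wide subcategory of the category of finitely presented R-modules. -/
open CategoryTheory Limits Opposite Pretriangulated DirectSum

universe u

section Defs

variable (R : Type u) [CommRing R]

/-- A commutative ring is *coherent* if every finitely generated ideal is finitely
presented as an `R`-module. -/
def IsCoherentRing : Prop :=
  ∀ I : Ideal R, I.FG → Module.FinitePresentation R I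

/-- `HasProjDimLE R n M` means that the module `M` admits a projective resolution of
length at most `n`. -/
def HasProjDimLE : ℕ → ModuleCat.{u} R → Prop
  | 0, M => Module.Projective R M
  | n + 1, M => ∃ (P : ModuleCat.{u} R) (f : P ⟶ M),
      Module.Projective R P ∧ Function.Surjective f ∧
        HasProjDimLE n (ModuleCat.of R (LinearMap.ker f.hom))

/-- A module has finite projective dimension if it admits a finite projective resolution. -/
def HasFiniteProjDim (M : ModuleCat.{u} R) : Prop := ∃ n, HasProjDimLE R n M

/-- A commutative ring is *regular* if every finitely generated ideal has finite
projective dimension. -/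
def IsRegularRing' : Prop :=
  ∀ I : Ideal R, I.FG → HasFiniteProjDim R (ModuleCat.of R I)

/-- `IsWideSubcategory R F W` : `W` is a wide subcategory of the full subcategory of
`R`-modules satisfying `F` (e.g. `F` = finitely presented, or finitely generated):
it is a nonempty class of modules satisfying `F`, closed under isomorphisms, kernels,
cokernels and extensions. -/
structure IsWideSubcategory (F : ModuleCat.{u} R → Prop) (W : Set (ModuleCat.{u} R)) :
    Prop where
  prop_mem : ∀ M ∈ W, F M
  nonempty : W.Nonempty
  iso_mem : ∀ {M N : ModuleCat.{u} R}, (M ≅ N) → M ∈ W → N ∈ W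
  ker_mem : ∀ {M N : ModuleCat.{u} R}, M ∈ W → N ∈ W → ∀ f : M ⟶ N,
      ModuleCat.of R (LinearMap.ker f.hom) ∈ W
  coker_mem : ∀ {M N : ModuleCat.{u} R}, M ∈ W → N ∈ W → ∀ f : M ⟶ N,
      ModuleCat.of R (N ⧸ LinearMap.range f.hom) ∈ W
  ext_mem : ∀ S : ShortComplex (ModuleCat.{u} R), S.ShortExact →
      S.X₁ ∈ W → S.X₃ ∈ W → S.X₂ ∈ W

/-- The predicate "finitely presented" on modules. -/
def FP : ModuleCat.{u} R → Prop := fun M => Module.FinitePresentation R M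

/-- The predicate "finitely generated" on modules. -/
def FG : ModuleCat.{u} R → Prop := fun M => Module.Finite R M

end Defs

section Aux

open TensorProduct

variable {R : Type u} [CommRing R]

/-- A linear equivalence between any two subsingleton modules. -/
def subsingletonLinearEquiv (X Y : Type*) [AddCommGroup X] [Module R X]
    [AddCommGroup Y] [Module R Y] [Subsingleton X] [Subsingleton Y] : X ≃ₗ[R] Y where
  toFun _ := 0
  map_add' _ _ := Subsingleton.elim _ _
  map_smul' _ _ := Subsingleton.elim _ _
  invFun _ := 0
  left_inv _ := Subsingleton.elim _ _
  right_inv _ := Subsingleton.elim _ _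

namespace IsWideSubcategory

variable {F : ModuleCat.{u} R → Prop} {W : Set (ModuleCat.{u} R)}

lemma mem_of_subsingleton (hW : IsWideSubcategory R F W) (Z : ModuleCat.{u} R)
    (hZ : Subsingleton Z) : Z ∈ W := by
  obtain ⟨M₀, hM₀⟩ := hW.nonempty
  have hker := hW.ker_mem hM₀ hM₀ (𝟙 M₀)
  haveI : Subsingleton (LinearMap.ker (ModuleCat.Hom.hom (𝟙 M₀))) := by
    refine ⟨fun x y => Subtype.ext ?_⟩
    have hx : (x : M₀) = 0 := x.2
    have hy : (y : M₀) = 0 := y.2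
    rw [hx, hy]
  exact hW.iso_mem ((subsingletonLinearEquiv (R := R) _ Z).toModuleIso) hker

lemma prodObj_mem (hW : IsWideSubcategory R F W) {M N : ModuleCat.{u} R}
    (hM : M ∈ W) (hN : N ∈ W) : ModuleCat.of R (M × N) ∈ W := by
  let f : M ⟶ ModuleCat.of R (M × N) := ModuleCat.ofHom (LinearMap.inl R M N)
  let g : ModuleCat.of R (M × N) ⟶ N := ModuleCat.ofHom (LinearMap.snd R M N)
  let S := ShortComplex.mk f g (by ext x; rfl)
  haveI : Mono S.f := (ModuleCat.mono_iff_injective f).mpr LinearMap.inl_injective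
  haveI : Epi S.g := (ModuleCat.epi_iff_surjective g).mpr (fun y => ⟨(0, y), rfl⟩)
  have hS : S.ShortExact :=
    { exact := (ShortComplex.moduleCat_exact_iff_range_eq_ker S).mpr (LinearMap.range_inl R M N) }
  exact hW.ext_mem S hS hM hN

lemma pi_mem (hW : IsWideSubcategory R F W) {M : ModuleCat.{u} R} (hM : M ∈ W)
    (ι : Type u) [Fintype ι] : ModuleCat.of R (ι → M) ∈ W := by
  classical
  refine Fintype.induction_empty_option
    (P := fun α _ => ModuleCat.of R (α → M) ∈ W) ?_ ?_ ?_ ι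
  · intro α β _ e h
    exact hW.iso_mem ((LinearEquiv.funCongrLeft R M e.symm).toModuleIso) h
  · haveI : Subsingleton (PEmpty.{u+1} → M) := ⟨fun a b => funext fun x => x.elim⟩
    exact hW.mem_of_subsingleton _ this
  · intro α _ h
    have hprod := hW.prodObj_mem hM h
    exact hW.iso_mem ((LinearEquiv.piOptionEquivProd R (ι := α)
      (M := fun _ => M)).symm.toModuleIso) hprod

end IsWideSubcategory

end Aux

namespace IsWideSubcategory

open TensorProduct

variable {R : Type u} [CommRing R]
variable {W : Set (ModuleCat.{u} R)}

lemma tensor_mem (hW : IsWideSubcategory R (FP R) W) {A : ModuleCat.{u} R} (hA : A ∈ W)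
    (B : Type u) [AddCommGroup B] [Module R B] [hfp : Module.FinitePresentation R B] :
    ModuleCat.of R (A ⊗[R] B) ∈ W := by
  classical
  obtain ⟨s, hs, hker⟩ := hfp.out
  obtain ⟨t, ht⟩ := hker
  set l : (↥s →₀ R) →ₗ[R] B := Finsupp.linearCombination R ((↑) : ↥s → B) with hl
  have hlsurj : Function.Surjective l := by
    rw [← LinearMap.range_eq_top, hl, Finsupp.range_linearCombination,
      Subtype.range_coe_subtype, Finset.setOf_mem, hs]
  set l₂ : (↥t →₀ R) →ₗ[R] (↥s →₀ R) :=
    Finsupp.linearCombination R ((↑) : ↥t → (↥s →₀ R)) with hl₂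
  have hrange : LinearMap.range l₂ = LinearMap.ker l := by
    rw [hl₂, Finsupp.range_linearCombination, Subtype.range_coe_subtype, Finset.setOf_mem, ht]
  have hexact : Function.Exact l₂ l := LinearMap.exact_iff.mpr hrange.symm
  let e0 : (A ⊗[R] (↥s →₀ R)) ≃ₗ[R] (↥s →₀ A) := TensorProduct.finsuppScalarRight R R A ↥s
  let e1 : (A ⊗[R] (↥t →₀ R)) ≃ₗ[R] (↥t →₀ A) := TensorProduct.finsuppScalarRight R R A ↥t
  let Φ : (↥t →₀ A) →ₗ[R] (↥s →₀ A) :=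
    e0.toLinearMap ∘ₗ (LinearMap.lTensor A l₂) ∘ₗ e1.symm.toLinearMap
  let ψ : (↥s →₀ A) →ₗ[R] (A ⊗[R] B) := (LinearMap.lTensor A l) ∘ₗ e0.symm.toLinearMap
  have hψ : Function.Surjective ψ :=
    (LinearMap.lTensor_surjective A hlsurj).comp e0.symm.surjective
  have h1 : LinearMap.ker (LinearMap.lTensor A l) = LinearMap.range (LinearMap.lTensor A l₂) :=
    (lTensor_exact A hexact hlsurj).linearMap_ker_eq
  have hkerψ : LinearMap.ker ψ = LinearMap.range Φ := by
    have hk : LinearMap.ker ψ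
        = Submodule.comap e0.symm.toLinearMap (LinearMap.ker (LinearMap.lTensor A l)) :=
      LinearMap.ker_comp _ _
    have hr : LinearMap.range Φ
        = Submodule.map e0.toLinearMap (LinearMap.range
            ((LinearMap.lTensor A l₂) ∘ₗ e1.symm.toLinearMap)) :=
      LinearMap.range_comp _ _
    rw [hr, LinearMap.range_comp_of_range_eq_top _ (LinearEquiv.range e1.symm), hk, h1]
    exact (Submodule.map_equiv_eq_comap_symm e0 _).symm
  -- memberships of the two finsupp modules
  have hsA : ModuleCat.of R (↥s →₀ A) ∈ W := by
    have hp := hW.pi_mem hA ↥s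
    exact hW.iso_mem ((Finsupp.linearEquivFunOnFinite R A ↥s).symm.toModuleIso) hp
  have htA : ModuleCat.of R (↥t →₀ A) ∈ W := by
    have hp := hW.pi_mem hA ↥t
    exact hW.iso_mem ((Finsupp.linearEquivFunOnFinite R A ↥t).symm.toModuleIso) hp
  have hcoker := hW.coker_mem htA hsA
    (ModuleCat.ofHom Φ : ModuleCat.of R (↥t →₀ A) ⟶ ModuleCat.of R (↥s →₀ A))
  let eq1 : ((↥s →₀ A) ⧸ LinearMap.range Φ) ≃ₗ[R] (A ⊗[R] B) :=
    (Submodule.quotEquivOfEq _ _ hkerψ.symm).trans (ψ.quotKerEquivOfSurjective hψ)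
  exact hW.iso_mem (eq1.toModuleIso) hcoker

end IsWideSubcategory

section Aux2

open TensorProduct

variable {R : Type u} [CommRing R]


lemma exists_one_functional {K V : Type u} [Field K] [AddCommGroup V] [Module K V]
    (v : V) (hv : v ≠ 0) : ∃ f : V → K, f v = 1 ∧ (∀ x y, f (x + y) = f x + f y) ∧
      (∀ (c : K) (x : V), f (c • x) = c * f x) := by
  obtain ⟨gV, hgV⟩ := LinearMap.exists_leftInverse_of_injective
    ((Submodule.span K {v}).subtype) (Submodule.ker_subtype _)
  set φk : V →ₗ[K] K :=
    (LinearEquiv.toSpanNonzeroSingleton K V v hv).symm.toLinearMap ∘ₗ gV with hφk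
  refine ⟨φk, ?_, fun x y => map_add _ _ _, fun c x => by rw [map_smul, smul_eq_mul]⟩
  have h1 : gV v = ⟨v, Submodule.mem_span_singleton_self v⟩ := by
    have := LinearMap.congr_fun hgV ⟨v, Submodule.mem_span_singleton_self v⟩
    simpa using this
  rw [hφk]
  simp only [LinearMap.coe_comp, Function.comp_apply, h1, LinearEquiv.coe_coe]
  rw [LinearEquiv.symm_apply_eq, LinearEquiv.toSpanNonzeroSingleton_one]

lemma ann_pair {W₁ W₂ : Set (ModuleCat.{u} R)} (h₁ : IsWideSubcategory R (FP R) W₁)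
    (h₂ : IsWideSubcategory R (FP R) W₂)
    (hzero : ∀ M ∈ W₁ ∩ W₂, Subsingleton M)
    {A B : ModuleCat.{u} R} (hA : A ∈ W₁) (hB : B ∈ W₂) :
    ∃ a b : R, a + b = 1 ∧ (∀ x : A, a • x = 0) ∧ (∀ y : B, b • y = 0) := by
  classical
  haveI fpA : Module.FinitePresentation R A := h₁.prop_mem A hA
  haveI fpB : Module.FinitePresentation R B := h₂.prop_mem B hB
  have hT1 : ModuleCat.of R (A ⊗[R] B) ∈ W₁ := h₁.tensor_mem hA B
  have hT2 : ModuleCat.of R (A ⊗[R] B) ∈ W₂ := by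
    have h := h₂.tensor_mem hB A
    exact h₂.iso_mem ((TensorProduct.comm R B A).toModuleIso) h
  haveI hTsub : Subsingleton (A ⊗[R] B) := hzero _ ⟨hT1, hT2⟩
  have htop : (Module.annihilator R A) ⊔ (Module.annihilator R B) = ⊤ := by
    by_contra hne
    obtain ⟨p, hpmax, hle⟩ := Ideal.exists_le_maximal _ hne
    haveI := hpmax
    -- the two quotients are nonzero
    have hnontriv : ∀ (M : Type u) [AddCommGroup M] [Module R M], ∀ _ : Module.Finite R M,
        Module.annihilator R M ≤ p → (p • ⊤ : Submodule R M) ≠ ⊤ := by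
      intro M _ _ hfin hann h
      obtain ⟨r, hr1, hr0⟩ :=
        Submodule.exists_sub_one_mem_and_smul_eq_zero_of_fg_of_le_smul p ⊤
          (Module.finite_def.mp hfin) (le_of_eq h.symm)
      have hrA : r ∈ Module.annihilator R M :=
        Module.mem_annihilator.mpr (fun x => hr0 x Submodule.mem_top)
      have h1p : (1 : R) ∈ p := by
        have := p.sub_mem (hann hrA) hr1
        simpa using this
      exact hpmax.ne_top ((Ideal.eq_top_iff_one p).mpr h1p)
    have hApA : (p • ⊤ : Submodule R A) ≠ ⊤ :=
      hnontriv A inferInstance (le_trans (le_trans le_sup_left hle) le_rfl)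
    have hBpB : (p • ⊤ : Submodule R B) ≠ ⊤ :=
      hnontriv B inferInstance (le_trans (le_trans le_sup_right hle) le_rfl)
    -- construct functionals
    have hfunct : ∀ (M : Type u) [AddCommGroup M] [Module R M],
        (p • ⊤ : Submodule R M) ≠ ⊤ → ∃ φ : M →ₗ[R] (R ⧸ p), ∃ x : M, φ x = 1 := by
      intro M _ _ hMp
      obtain ⟨x, hx⟩ : ∃ x : M, x ∉ (p • ⊤ : Submodule R M) := by
        by_contra h
        push_neg at h
        exact hMp (Submodule.eq_top_iff'.mpr h)
      set v : M ⧸ (p • ⊤ : Submodule R M) := Submodule.Quotient.mk x with hv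
      have hvne : v ≠ 0 := by
        rw [hv, ne_eq, Submodule.Quotient.mk_eq_zero]
        exact hx
      obtain ⟨f, hf1, hfadd, hfsmul⟩ :=
        @exists_one_functional (R ⧸ p) (M ⧸ (p • ⊤ : Submodule R M))
          (Ideal.Quotient.field p) _ inferInstance v hvne
      refine ⟨?_, x, ?_⟩
      · exact
          { toFun := fun m => f (Submodule.Quotient.mk m)
            map_add' := fun m m' => by
              rw [Submodule.Quotient.mk_add, hfadd]
            map_smul' := fun r m => by
              show f (Submodule.Quotient.mk (r • m)) = r • f (Submodule.Quotient.mk m)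
              have hsm : f (Submodule.Quotient.mk (p := (p • ⊤ : Submodule R M)) (r • m))
                  = f ((Ideal.Quotient.mk p r) •
                      Submodule.Quotient.mk (p := (p • ⊤ : Submodule R M)) m) := by
                rw [Module.Quotient.mk_smul_mk]
              have hscal : ∀ (c : R ⧸ p), r • c = Ideal.Quotient.mk p r * c := fun c => by
                obtain ⟨u, rfl⟩ := Ideal.Quotient.mk_surjective c
                rfl
              rw [hsm, hfsmul, hscal] }
      · exact hf1
    obtain ⟨φA, xA, hφA⟩ := hfunct A hApA
    obtain ⟨φB, xB, hφB⟩ := hfunct B hBpB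
    let γ : A →ₗ[R] B →ₗ[R] (R ⧸ p) := LinearMap.mk₂ R (fun x y => φA x * φB y)
      (fun x x' y => by rw [map_add, add_mul])
      (fun r x y => by rw [map_smul, smul_mul_assoc])
      (fun x y y' => by rw [map_add, mul_add])
      (fun r x y => by rw [map_smul, mul_smul_comm])
    have h0 : TensorProduct.lift γ (xA ⊗ₜ[R] xB) = TensorProduct.lift γ 0 :=
      congrArg _ (Subsingleton.elim _ _)
    rw [map_zero, TensorProduct.lift.tmul] at h0
    have : φA xA * φB xB = 0 := h0
    rw [hφA, hφB] at this
    have h1p : (1 : R) ∈ p := Ideal.Quotient.eq_zero_iff_mem.mp (by simpa using this)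
    exact hpmax.ne_top ((Ideal.eq_top_iff_one p).mpr h1p)
  have h1 : (1 : R) ∈ Module.annihilator R A ⊔ Module.annihilator R B := by
    rw [htop]; exact Submodule.mem_top
  obtain ⟨a, ha, b, hb, hab⟩ := Submodule.mem_sup.mp h1
  exact ⟨a, b, hab, fun x => Module.mem_annihilator.mp ha x,
    fun y => Module.mem_annihilator.mp hb y⟩

end Aux2

section Aux3

variable {R : Type u} [CommRing R]

lemma hom_eq_zero {A B : Type u} [AddCommGroup A] [Module R A] [AddCommGroup B] [Module R B]
    {a b : R} (hab : a + b = 1) (ha : ∀ x : A, a • x = 0) (hb : ∀ y : B, b • y = 0)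
    (f : A →ₗ[R] B) : f = 0 := by
  apply LinearMap.ext
  intro x
  have hx : f x = f (a • x) + f (b • x) := by
    rw [← map_add, ← add_smul, hab, one_smul]
  rw [hx, ha, map_zero, map_smul, hb, zero_add]
  rfl

lemma exists_section {E A' : Type u} [AddCommGroup E] [Module R E] [AddCommGroup A']
    [Module R A'] (g : E →ₗ[R] A') (hg : Function.Surjective g) (a b : R) (hab : a + b = 1)
    (hbker : ∀ x : E, g x = 0 → b • x = 0) (ha : ∀ y : A', a • y = 0) :
    ∃ σ : A' →ₗ[R] E, ∀ y, g (σ y) = y := by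
  classical
  have key : ∀ (e e' : E), g e = g e' → b • e = b • e' := by
    intro e e' he
    have h0 : g (e - e') = 0 := by rw [map_sub, he, sub_self]
    have := hbker _ h0
    rw [smul_sub, sub_eq_zero] at this
    exact this
  choose sec hsec using hg
  refine ⟨{ toFun := fun y => b • sec y
            map_add' := fun y₁ y₂ => ?_
            map_smul' := fun r y => ?_ }, fun y => ?_⟩
  · rw [← smul_add]
    exact key _ _ (by rw [map_add, hsec, hsec, hsec])
  · show b • sec (r • y) = r • (b • sec y)
    rw [smul_comm r b]
    exact key _ _ (by rw [map_smul, hsec, hsec])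
  · show g (b • sec y) = y
    rw [map_smul, hsec]
    have h1 : b • y = (a + b) • y - a • y := by rw [add_smul]; abel
    rw [h1, ha, hab, one_smul, sub_zero]

/-- Given a linear section, the middle term splits as a product. -/
noncomputable def sectionEquiv {E A' : Type u} [AddCommGroup E] [Module R E] [AddCommGroup A']
    [Module R A'] (g : E →ₗ[R] A') (σ : A' →ₗ[R] E) (hσ : ∀ y, g (σ y) = y) :
    E ≃ₗ[R] (LinearMap.ker g) × A' := by
  refine LinearEquiv.ofLinear
    (LinearMap.prod (LinearMap.codRestrict (LinearMap.ker g)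
      (LinearMap.id - σ ∘ₗ g) ?_) g)
    ((LinearMap.ker g).subtype.coprod σ) ?_ ?_
  · intro e
    simp only [LinearMap.mem_ker, LinearMap.sub_apply, LinearMap.id_apply,
      LinearMap.coe_comp, Function.comp_apply, map_sub, hσ, sub_self]
  · apply LinearMap.ext
    rintro ⟨⟨x, hx⟩, y⟩
    have hgx : g x = 0 := hx
    apply Prod.ext
    · apply Subtype.ext
      simp [hσ, hgx]
    · simp [hσ, hgx]
  · apply LinearMap.ext
    intro e
    simp

/-- Product of submodules is equivalent to product of the two. -/
def prodSubmoduleEquiv {M N : Type u} [AddCommGroup M] [Module R M] [AddCommGroup N]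
    [Module R N] (p : Submodule R M) (q : Submodule R N) :
    ↥(p.prod q) ≃ₗ[R] (↥p × ↥q) where
  toFun x := (⟨x.1.1, x.2.1⟩, ⟨x.1.2, x.2.2⟩)
  map_add' _ _ := rfl
  map_smul' _ _ := rfl
  invFun y := ⟨(y.1.1, y.2.1), ⟨y.1.2, y.2.2⟩⟩
  left_inv _ := rfl
  right_inv _ := rfl

/-- Quotient of a product by a product of submodules. -/
noncomputable def quotProdEquiv {M N : Type u} [AddCommGroup M] [Module R M] [AddCommGroup N]
    [Module R N] (p : Submodule R M) (q : Submodule R N) :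
    ((M × N) ⧸ (p.prod q)) ≃ₗ[R] ((M ⧸ p) × (N ⧸ q)) := by
  have hker : LinearMap.ker (LinearMap.prodMap p.mkQ q.mkQ) = p.prod q := by
    rw [LinearMap.ker_prodMap, Submodule.ker_mkQ, Submodule.ker_mkQ]
  have hsurj : Function.Surjective (LinearMap.prodMap p.mkQ q.mkQ) := by
    rintro ⟨u, v⟩
    obtain ⟨x, rfl⟩ := p.mkQ_surjective u
    obtain ⟨y, rfl⟩ := q.mkQ_surjective v
    exact ⟨(x, y), rfl⟩
  exact (Submodule.quotEquivOfEq _ _ hker.symm).trans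
    ((LinearMap.prodMap p.mkQ q.mkQ).quotKerEquivOfSurjective hsurj)

lemma range_prodMap_eq {M N M' N' : Type u} [AddCommGroup M] [Module R M] [AddCommGroup N]
    [Module R N] [AddCommGroup M'] [Module R M'] [AddCommGroup N'] [Module R N']
    (f : M →ₗ[R] M') (g : N →ₗ[R] N') :
    LinearMap.range (LinearMap.prodMap f g) = (LinearMap.range f).prod (LinearMap.range g) := by
  ext ⟨u, v⟩
  constructor
  · rintro ⟨⟨x, y⟩, h⟩
    rw [LinearMap.prodMap_apply] at h
    obtain ⟨h1, h2⟩ := Prod.mk.injEq _ _ _ _ ▸ h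
    exact ⟨⟨x, h1⟩, ⟨y, h2⟩⟩
  · rintro ⟨⟨x, hx⟩, ⟨y, hy⟩⟩
    exact ⟨(x, y), by rw [LinearMap.prodMap_apply, hx, hy]⟩

/-- Finite presentation passes to products. -/
lemma finitePresentation_prod {M N : Type u} [AddCommGroup M] [Module R M] [AddCommGroup N]
    [Module R N] [Module.FinitePresentation R M] [Module.FinitePresentation R N] :
    Module.FinitePresentation R (M × N) := by
  obtain ⟨L₁, _, _, K₁, e₁, hfree₁, hfin₁, hfg₁⟩ :=
    Module.FinitePresentation.equiv_quotient R M
  obtain ⟨L₂, _, _, K₂, e₂, hfree₂, hfin₂, hfg₂⟩ :=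
    Module.FinitePresentation.equiv_quotient R N
  haveI := hfree₁; haveI := hfin₁; haveI := hfree₂; haveI := hfin₂
  let e : ((L₁ × L₂) ⧸ (K₁.prod K₂)) ≃ₗ[R] (M × N) :=
    (quotProdEquiv K₁ K₂).trans (e₁.symm.prodCongr e₂.symm)
  have hsurj : Function.Surjective (e.toLinearMap ∘ₗ (K₁.prod K₂).mkQ) :=
    e.surjective.comp (K₁.prod K₂).mkQ_surjective
  apply Module.finitePresentation_of_free_of_surjective
    (e.toLinearMap ∘ₗ (K₁.prod K₂).mkQ) hsurj
  have : LinearMap.ker (e.toLinearMap ∘ₗ (K₁.prod K₂).mkQ) = K₁.prod K₂ := by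
    rw [LinearMap.ker_comp, LinearEquiv.ker, Submodule.comap_bot, Submodule.ker_mkQ]
  rw [this]
  exact hfg₁.prod hfg₂

end Aux3



set_option maxHeartbeats 1000000 in
/-- **Coproduct of disjoint wide subcategories is wide (Proposition 3.4 / prop:0).**
Let `R` be a commutative regular coherent ring and `W₁`, `W₂` wide subcategories of the
category of finitely presented `R`-modules such that every module belonging to both is
zero. Then the full subcategory `W₁ ⊔ W₂` of modules isomorphic to `M₁ ⊕ M₂` with
`M₁ ∈ W₁` and `M₂ ∈ W₂` is again a wide subcategory of finitely presented modules. -/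
theorem coprod_of_wide_isWide (R : Type u) [CommRing R]
    (hcoh : IsCoherentRing R) (hreg : IsRegularRing' R)
    (W₁ W₂ : Set (ModuleCat.{u} R))
    (h₁ : IsWideSubcategory R (FP R) W₁) (h₂ : IsWideSubcategory R (FP R) W₂)
    (hzero : ∀ M ∈ W₁ ∩ W₂, Subsingleton M) :
    IsWideSubcategory R (FP R)
      {M : ModuleCat.{u} R | ∃ M₁ ∈ W₁, ∃ M₂ ∈ W₂, Nonempty (M ≃ₗ[R] M₁ × M₂)} := by
  classical
  have hom0 : ∀ {A B : ModuleCat.{u} R}, A ∈ W₁ → B ∈ W₂ → ∀ f : A →ₗ[R] B, f = 0 := by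
    intro A B hA hB f
    obtain ⟨a, b, hab, ha, hb⟩ := ann_pair h₁ h₂ hzero hA hB
    exact hom_eq_zero hab ha hb f
  have hom0' : ∀ {A B : ModuleCat.{u} R}, A ∈ W₁ → B ∈ W₂ → ∀ f : B →ₗ[R] A, f = 0 := by
    intro A B hA hB f
    obtain ⟨a, b, hab, ha, hb⟩ := ann_pair h₁ h₂ hzero hA hB
    exact hom_eq_zero (by rw [add_comm]; exact hab) hb ha f
  refine { prop_mem := ?_, nonempty := ?_, iso_mem := ?_, ker_mem := ?_,
           coker_mem := ?_, ext_mem := ?_ }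
  -- prop_mem
  · rintro M ⟨M₁, hM₁, M₂, hM₂, ⟨e⟩⟩
    haveI : Module.FinitePresentation R M₁ := h₁.prop_mem M₁ hM₁
    haveI : Module.FinitePresentation R M₂ := h₂.prop_mem M₂ hM₂
    haveI : Module.FinitePresentation R (M₁ × M₂) := finitePresentation_prod
    show Module.FinitePresentation R M
    exact Module.finitePresentation_of_surjective e.symm.toLinearMap e.symm.surjective
      (by rw [LinearEquiv.ker]; exact Submodule.fg_bot)
  -- nonempty
  · obtain ⟨M₁, hM₁⟩ := h₁.nonempty
    obtain ⟨M₂, hM₂⟩ := h₂.nonempty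
    exact ⟨ModuleCat.of R (M₁ × M₂), M₁, hM₁, M₂, hM₂, ⟨LinearEquiv.refl R (M₁ × M₂)⟩⟩
  -- iso_mem
  · rintro M N i ⟨M₁, hM₁, M₂, hM₂, ⟨e⟩⟩
    exact ⟨M₁, hM₁, M₂, hM₂, ⟨(i.symm.toLinearEquiv).trans e⟩⟩
  -- ker_mem
  · rintro M N ⟨A₁, hA₁, A₂, hA₂, ⟨eM⟩⟩ ⟨B₁, hB₁, B₂, hB₂, ⟨eN⟩⟩ f
    set g : (A₁ × A₂) →ₗ[R] (B₁ × B₂) :=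
      eN.toLinearMap ∘ₗ (f.hom ∘ₗ eM.symm.toLinearMap) with hgdef
    set g₁ : A₁ →ₗ[R] B₁ := LinearMap.fst R B₁ B₂ ∘ₗ g ∘ₗ LinearMap.inl R A₁ A₂ with hg₁def
    set g₂ : A₂ →ₗ[R] B₂ := LinearMap.snd R B₁ B₂ ∘ₗ g ∘ₗ LinearMap.inr R A₁ A₂ with hg₂def
    have hcross1 : LinearMap.snd R B₁ B₂ ∘ₗ g ∘ₗ LinearMap.inl R A₁ A₂ = 0 :=
      hom0 hA₁ hB₂ _
    have hcross2 : LinearMap.fst R B₁ B₂ ∘ₗ g ∘ₗ LinearMap.inr R A₁ A₂ = 0 :=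
      hom0' hB₁ hA₂ _
    have hgprod : g = LinearMap.prodMap g₁ g₂ := by
      apply LinearMap.ext
      rintro ⟨x, y⟩
      have hxy : g (x, y) = g (x, 0) + g (0, y) := by
        rw [← map_add, Prod.mk_add_mk, add_zero, zero_add]
      have h10 : (g (0, y)).1 = 0 := by
        have := LinearMap.congr_fun hcross2 y
        simpa using this
      have h20 : (g (x, 0)).2 = 0 := by
        have := LinearMap.congr_fun hcross1 x
        simpa using this
      rw [LinearMap.prodMap_apply, hxy]
      apply Prod.ext
      · show (g (x, 0)).1 + (g (0, y)).1 = g₁ x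
        rw [h10, add_zero, hg₁def]
        simp [LinearMap.comp_apply]
      · show (g (x, 0)).2 + (g (0, y)).2 = g₂ y
        rw [h20, zero_add, hg₂def]
        simp [LinearMap.comp_apply]
    have hker1 : Submodule.map eM.toLinearMap (LinearMap.ker f.hom)
        = LinearMap.ker g := by
      ext w
      simp only [Submodule.mem_map, LinearMap.mem_ker]
      constructor
      · rintro ⟨m, hm, rfl⟩
        rw [hgdef]
        simp only [LinearMap.comp_apply, LinearEquiv.coe_coe, LinearEquiv.symm_apply_apply,
          hm, map_zero]
      · intro hw
        refine ⟨eM.symm w, ?_, by simp⟩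
        have hgw : g w = eN (f.hom (eM.symm w)) := by
          rw [hgdef]
          simp [LinearMap.comp_apply]
        rw [hgw] at hw
        exact eN.map_eq_zero_iff.mp hw
    have hK1 := h₁.ker_mem hA₁ hB₁ (ModuleCat.ofHom g₁ : A₁ ⟶ B₁)
    have hK2 := h₂.ker_mem hA₂ hB₂ (ModuleCat.ofHom g₂ : A₂ ⟶ B₂)
    refine ⟨_, hK1, _, hK2, ⟨?_⟩⟩
    exact (((eM.submoduleMap (LinearMap.ker f.hom)).trans
      (LinearEquiv.ofEq _ _ hker1)).trans
      (LinearEquiv.ofEq _ _ (by rw [hgprod, LinearMap.ker_prodMap]; rfl))).trans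
      (prodSubmoduleEquiv _ _)
  -- coker_mem
  · rintro M N ⟨A₁, hA₁, A₂, hA₂, ⟨eM⟩⟩ ⟨B₁, hB₁, B₂, hB₂, ⟨eN⟩⟩ f
    set g : (A₁ × A₂) →ₗ[R] (B₁ × B₂) :=
      eN.toLinearMap ∘ₗ (f.hom ∘ₗ eM.symm.toLinearMap) with hgdef
    set g₁ : A₁ →ₗ[R] B₁ := LinearMap.fst R B₁ B₂ ∘ₗ g ∘ₗ LinearMap.inl R A₁ A₂ with hg₁def
    set g₂ : A₂ →ₗ[R] B₂ := LinearMap.snd R B₁ B₂ ∘ₗ g ∘ₗ LinearMap.inr R A₁ A₂ with hg₂def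
    have hcross1 : LinearMap.snd R B₁ B₂ ∘ₗ g ∘ₗ LinearMap.inl R A₁ A₂ = 0 :=
      hom0 hA₁ hB₂ _
    have hcross2 : LinearMap.fst R B₁ B₂ ∘ₗ g ∘ₗ LinearMap.inr R A₁ A₂ = 0 :=
      hom0' hB₁ hA₂ _
    have hgprod : g = LinearMap.prodMap g₁ g₂ := by
      apply LinearMap.ext
      rintro ⟨x, y⟩
      have hxy : g (x, y) = g (x, 0) + g (0, y) := by
        rw [← map_add, Prod.mk_add_mk, add_zero, zero_add]
      have h10 : (g (0, y)).1 = 0 := by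
        have := LinearMap.congr_fun hcross2 y
        simpa using this
      have h20 : (g (x, 0)).2 = 0 := by
        have := LinearMap.congr_fun hcross1 x
        simpa using this
      rw [LinearMap.prodMap_apply, hxy]
      apply Prod.ext
      · show (g (x, 0)).1 + (g (0, y)).1 = g₁ x
        rw [h10, add_zero, hg₁def]
        simp [LinearMap.comp_apply]
      · show (g (x, 0)).2 + (g (0, y)).2 = g₂ y
        rw [h20, zero_add, hg₂def]
        simp [LinearMap.comp_apply]
    have hrange1 : Submodule.map eN.toLinearMap (LinearMap.range f.hom)
        = LinearMap.range g := by
      ext w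
      simp only [Submodule.mem_map, LinearMap.mem_range]
      constructor
      · rintro ⟨v, ⟨m, rfl⟩, rfl⟩
        refine ⟨eM m, ?_⟩
        rw [hgdef]
        simp [LinearMap.comp_apply]
      · rintro ⟨v, rfl⟩
        refine ⟨f.hom (eM.symm v), ⟨eM.symm v, rfl⟩, ?_⟩
        rw [hgdef]
        simp [LinearMap.comp_apply]
    have hC1 := h₁.coker_mem hA₁ hB₁ (ModuleCat.ofHom g₁ : A₁ ⟶ B₁)
    have hC2 := h₂.coker_mem hA₂ hB₂ (ModuleCat.ofHom g₂ : A₂ ⟶ B₂)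
    refine ⟨_, hC1, _, hC2, ⟨?_⟩⟩
    exact ((Submodule.Quotient.equiv (LinearMap.range f.hom)
      (LinearMap.range g) eN hrange1).trans
      (Submodule.quotEquivOfEq _ _ (by rw [hgprod, range_prodMap_eq]; rfl))).trans
      (quotProdEquiv _ _)
  -- ext_mem
  · rintro S hS ⟨A₁, hA₁, A₂, hA₂, ⟨eA⟩⟩ ⟨B₁, hB₁, B₂, hB₂, ⟨eB⟩⟩
    have hιinj : Function.Injective S.f.hom := hS.moduleCat_injective_f
    have hπsurj : Function.Surjective S.g.hom := hS.moduleCat_surjective_g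
    have hexact : LinearMap.range S.f.hom
        = LinearMap.ker S.g.hom := hS.exact.moduleCat_range_eq_ker
    set ι : S.X₁ →ₗ[R] S.X₂ := S.f.hom with hι
    set π : S.X₂ →ₗ[R] S.X₃ := S.g.hom with hπdef
    have hπι : ∀ z : S.X₁, π (ι z) = 0 := fun z => by
      have : ι z ∈ LinearMap.ker π := hexact ▸ LinearMap.mem_range_self ι z
      exact this
    set ι₁ : A₁ →ₗ[R] S.X₂ := ι ∘ₗ (eA.symm.toLinearMap ∘ₗ LinearMap.inl R A₁ A₂) with hι₁
    set ι₂ : A₂ →ₗ[R] S.X₂ := ι ∘ₗ (eA.symm.toLinearMap ∘ₗ LinearMap.inr R A₁ A₂) with hι₂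
    set π₁ : S.X₂ →ₗ[R] B₁ := LinearMap.fst R B₁ B₂ ∘ₗ (eB.toLinearMap ∘ₗ π) with hπ₁
    set π₂ : S.X₂ →ₗ[R] B₂ := LinearMap.snd R B₁ B₂ ∘ₗ (eB.toLinearMap ∘ₗ π) with hπ₂
    have hπ₁ι : ∀ z : S.X₁, π₁ (ι z) = 0 := fun z => by
      rw [hπ₁]; simp [LinearMap.comp_apply, hπι z]
    have hπ₂ι : ∀ z : S.X₁, π₂ (ι z) = 0 := fun z => by
      rw [hπ₂]; simp [LinearMap.comp_apply, hπι z]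
    have hπ₁ι₂ : ∀ y : A₂, π₁ (ι₂ y) = 0 := fun y => by rw [hι₂]; exact hπ₁ι _
    have hπ₂ι₂ : ∀ y : A₂, π₂ (ι₂ y) = 0 := fun y => by rw [hι₂]; exact hπ₂ι _
    have hπ₁ι₁ : ∀ x : A₁, π₁ (ι₁ x) = 0 := fun x => by rw [hι₁]; exact hπ₁ι _
    have hπ₂ι₁ : ∀ x : A₁, π₂ (ι₁ x) = 0 := fun x => by rw [hι₁]; exact hπ₂ι _
    have hι₂inj : Function.Injective ι₂ := by
      rw [hι₂]
      exact (hιinj.comp eA.symm.injective).comp LinearMap.inr_injective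
    have hπ₂surj : Function.Surjective π₂ := by
      intro b₂
      obtain ⟨e, he⟩ := hπsurj (eB.symm (0, b₂))
      refine ⟨e, ?_⟩
      rw [hπ₂]
      simp [LinearMap.comp_apply, he]
    set N₂ : Submodule R S.X₂ := LinearMap.range ι₂ with hN₂
    set q : S.X₂ →ₗ[R] (S.X₂ ⧸ N₂) := N₂.mkQ with hq
    have hN₂π₂ : N₂ ≤ LinearMap.ker π₂ := by
      rintro x ⟨y, rfl⟩
      exact hπ₂ι₂ y
    have hN₂π₁ : N₂ ≤ LinearMap.ker π₁ := by
      rintro x ⟨y, rfl⟩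
      exact hπ₁ι₂ y
    set π₂bar : (S.X₂ ⧸ N₂) →ₗ[R] B₂ := N₂.liftQ π₂ hN₂π₂ with hπ₂bar
    set π₁bar : (S.X₂ ⧸ N₂) →ₗ[R] B₁ := N₂.liftQ π₁ hN₂π₁ with hπ₁bar
    have hπ₂barq : ∀ e : S.X₂, π₂bar (q e) = π₂ e := fun e => by
      rw [hπ₂bar, hq]
      rfl
    have hπ₁barq : ∀ e : S.X₂, π₁bar (q e) = π₁ e := fun e => by
      rw [hπ₁bar, hq]
      rfl
    have hqsurj : Function.Surjective q := N₂.mkQ_surjective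
    have hπ₂barsurj : Function.Surjective π₂bar := by
      intro b₂
      obtain ⟨e, he⟩ := hπ₂surj b₂
      exact ⟨q e, by rw [hπ₂barq, he]⟩
    set K : Submodule R (S.X₂ ⧸ N₂) := LinearMap.ker π₂bar with hK
    set j : A₁ →ₗ[R] (S.X₂ ⧸ N₂) := q ∘ₗ ι₁ with hj
    have hjmem : ∀ x : A₁, j x ∈ K := fun x => by
      rw [hK, hj]
      show π₂bar (q (ι₁ x)) = 0
      rw [hπ₂barq]
      exact hπ₂ι₁ x
    set jK : A₁ →ₗ[R] ↥K := LinearMap.codRestrict K j hjmem with hjK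
    set gK : ↥K →ₗ[R] B₁ := π₁bar ∘ₗ K.subtype with hgK
    have hqι₂ : ∀ y : A₂, q (ι₂ y) = 0 := fun y => by
      rw [hq, Submodule.mkQ_apply, Submodule.Quotient.mk_eq_zero]
      exact ⟨y, rfl⟩
    have hjinj : Function.Injective j := by
      have hzero' : ∀ x : A₁, j x = 0 → x = 0 := by
        intro x hx
        rw [hj, LinearMap.comp_apply, hq, Submodule.mkQ_apply,
          Submodule.Quotient.mk_eq_zero] at hx
        obtain ⟨y, hy⟩ := hx
        have h1 : ι (eA.symm (0, y)) = ι (eA.symm (x, 0)) := by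
          have hy' := hy
          rw [hι₂, hι₁] at hy'
          simpa [LinearMap.comp_apply] using hy'
        have h2 : ((0 : A₁), y) = (x, (0 : A₂)) := eA.symm.injective (hιinj h1)
        exact ((Prod.mk.injEq _ _ _ _).mp h2).1.symm
      intro x y hxy
      have := hzero' (x - y) (by rw [map_sub, hxy, sub_self])
      exact sub_eq_zero.mp this
    have hw₁ : ∀ x : A₁, gK (jK x) = 0 := fun x => by
      rw [hgK, LinearMap.comp_apply]
      show π₁bar (j x) = 0
      rw [hj, LinearMap.comp_apply, hπ₁barq]
      exact hπ₁ι₁ x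
    let jKhom : A₁ ⟶ ModuleCat.of R ↥K := ModuleCat.ofHom jK
    let gKhom : ModuleCat.of R ↥K ⟶ B₁ := ModuleCat.ofHom gK
    let SC₁ := ShortComplex.mk jKhom gKhom (by ext x; exact hw₁ x)
    haveI : Mono SC₁.f := (ModuleCat.mono_iff_injective _).mpr (by
      intro x y hxy
      exact hjinj (congrArg Subtype.val hxy))
    haveI : Epi SC₁.g := (ModuleCat.epi_iff_surjective _).mpr (by
      intro b₁
      obtain ⟨e, he⟩ := hπsurj (eB.symm (b₁, 0))
      have he2 : π₂ e = 0 := by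
        rw [hπ₂]; simp [LinearMap.comp_apply, he]
      have he1 : π₁ e = b₁ := by
        rw [hπ₁]; simp [LinearMap.comp_apply, he]
      refine ⟨⟨q e, ?_⟩, ?_⟩
      · show π₂bar (q e) = 0
        rw [hπ₂barq]; exact he2
      · show gK ⟨q e, _⟩ = b₁
        rw [hgK, LinearMap.comp_apply]
        show π₁bar (q e) = b₁
        rw [hπ₁barq]; exact he1)
    have hSC₁exact : SC₁.Exact := by
      rw [ShortComplex.moduleCat_exact_iff_range_eq_ker]
      ext x
      simp only [LinearMap.mem_range, LinearMap.mem_ker]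
      constructor
      · rintro ⟨z, rfl⟩
        exact hw₁ z
      · intro h0
        obtain ⟨e, he⟩ := hqsurj (K.subtype x)
        have he2 : π₂ e = 0 := by
          rw [← hπ₂barq, he]
          exact x.2
        have he1 : π₁ e = 0 := by
          rw [← hπ₁barq, he]
          exact h0
        have heB : eB (π e) = 0 := by
          rw [hπ₁] at he1
          rw [hπ₂] at he2
          simp only [LinearMap.comp_apply, LinearEquiv.coe_coe, LinearMap.fst_apply,
            LinearMap.snd_apply] at he1 he2
          exact Prod.ext he1 he2
        have hπe : π e = 0 := eB.map_eq_zero_iff.mp heB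
        have hmem : e ∈ LinearMap.range ι := by
          rw [hexact]
          exact hπe
        obtain ⟨z, hz⟩ := hmem
        have hze : e = ι₁ (eA z).1 + ι₂ (eA z).2 := by
          have h2 : (eA.symm ((eA z).1, 0) + eA.symm (0, (eA z).2)) = z := by
            rw [← map_add, Prod.mk_add_mk, add_zero, zero_add, eA.symm_apply_apply]
          calc e = ι z := hz.symm
          _ = ι (eA.symm ((eA z).1, 0) + eA.symm (0, (eA z).2)) := by rw [h2]
          _ = ι₁ (eA z).1 + ι₂ (eA z).2 := by rw [map_add, hι₁, hι₂]; rfl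
        refine ⟨(eA z).1, ?_⟩
        apply Subtype.ext
        show j (eA z).1 = K.subtype x
        rw [← he, hj, LinearMap.comp_apply]
        conv_rhs => rw [hze]
        rw [map_add, hqι₂, add_zero]
    have hSE₁ : SC₁.ShortExact := { exact := hSC₁exact }
    have hKmem : ModuleCat.of R ↥K ∈ W₁ := h₁.ext_mem SC₁ hSE₁ hA₁ hB₁
    -- splitting of 0 → K → X₂/N₂ → B₂ → 0
    obtain ⟨a, b, hab, hannK, hannB₂⟩ := ann_pair h₁ h₂ hzero hKmem hB₂
    have hkerkill : ∀ x : (S.X₂ ⧸ N₂), π₂bar x = 0 → a • x = 0 := by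
      intro x hx
      exact congrArg Subtype.val (hannK ⟨x, hx⟩)
    obtain ⟨σ, hσ⟩ := exists_section π₂bar hπ₂barsurj b a
      (by rw [add_comm]; exact hab) hkerkill hannB₂
    set Fsub : Submodule R S.X₂ := Submodule.comap q (LinearMap.range σ) with hF
    have hN₂F : N₂ ≤ Fsub := by
      intro x hx
      show q x ∈ LinearMap.range σ
      have hq0 : q x = 0 := by
        rw [hq, Submodule.mkQ_apply, Submodule.Quotient.mk_eq_zero]
        exact hx
      rw [hq0]
      exact Submodule.zero_mem _
    have hι₂F : ∀ y : A₂, ι₂ y ∈ Fsub := fun y => hN₂F ⟨y, rfl⟩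
    set jF : A₂ →ₗ[R] ↥Fsub := LinearMap.codRestrict Fsub ι₂ hι₂F with hjF
    set gF : ↥Fsub →ₗ[R] B₂ := π₂ ∘ₗ Fsub.subtype with hgF
    have hw₂ : ∀ y : A₂, gF (jF y) = 0 := fun y => by
      rw [hgF, LinearMap.comp_apply]
      show π₂ (ι₂ y) = 0
      exact hπ₂ι₂ y
    let jFhom : A₂ ⟶ ModuleCat.of R ↥Fsub := ModuleCat.ofHom jF
    let gFhom : ModuleCat.of R ↥Fsub ⟶ B₂ := ModuleCat.ofHom gF
    let SC₂ := ShortComplex.mk jFhom gFhom (by ext y; exact hw₂ y)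
    haveI : Mono SC₂.f := (ModuleCat.mono_iff_injective _).mpr (by
      intro x y hxy
      exact hι₂inj (congrArg Subtype.val hxy))
    haveI : Epi SC₂.g := (ModuleCat.epi_iff_surjective _).mpr (by
      intro b₂
      obtain ⟨e, he⟩ := hqsurj (σ b₂)
      have heF : e ∈ Fsub := by
        show q e ∈ LinearMap.range σ
        rw [he]
        exact ⟨b₂, rfl⟩
      refine ⟨⟨e, heF⟩, ?_⟩
      show π₂ e = b₂
      rw [← hπ₂barq, he, hσ])
    have hSC₂exact : SC₂.Exact := by
      rw [ShortComplex.moduleCat_exact_iff_range_eq_ker]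
      ext x
      simp only [LinearMap.mem_range, LinearMap.mem_ker]
      constructor
      · rintro ⟨y, rfl⟩
        exact hw₂ y
      · intro h0
        have hπ₂e : π₂ (Fsub.subtype x) = 0 := h0
        have heF : q (Fsub.subtype x) ∈ LinearMap.range σ := x.2
        obtain ⟨u, hu⟩ := heF
        have hu0 : u = 0 := by
          rw [← hσ u, hu, hπ₂barq]
          exact hπ₂e
        have hqe0 : q (Fsub.subtype x) = 0 := by rw [← hu, hu0, map_zero]
        have hmem : Fsub.subtype x ∈ N₂ := by
          rwa [hq, Submodule.mkQ_apply, Submodule.Quotient.mk_eq_zero] at hqe0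
        obtain ⟨y, hy⟩ := hmem
        exact ⟨y, Subtype.ext hy⟩
    have hSE₂ : SC₂.ShortExact := { exact := hSC₂exact }
    have hFmem : ModuleCat.of R ↥Fsub ∈ W₂ := h₂.ext_mem SC₂ hSE₂ hA₂ hB₂
    -- identify X₂ ⧸ Fsub with K
    have hmapFq : Fsub.map N₂.mkQ = LinearMap.range σ := by
      rw [hF, ← hq, Submodule.map_comap_eq]
      rw [hq, Submodule.range_mkQ, top_inf_eq]
    set uK : ↥K →ₗ[R] ((S.X₂ ⧸ N₂) ⧸ LinearMap.range σ) :=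
      (LinearMap.range σ).mkQ ∘ₗ K.subtype with huK
    have huKinj : Function.Injective uK := by
      have hzero' : ∀ x : ↥K, uK x = 0 → x = 0 := by
        intro x hx
        rw [huK, LinearMap.comp_apply, Submodule.mkQ_apply,
          Submodule.Quotient.mk_eq_zero] at hx
        obtain ⟨u, hu⟩ := hx
        have hu0 : u = 0 := by
          rw [← hσ u, hu]
          exact x.2
        have hval : K.subtype x = 0 := by rw [← hu, hu0, map_zero]
        exact Subtype.ext hval
      intro x y hxy
      have := hzero' (x - y) (by rw [map_sub, hxy, sub_self])
      exact sub_eq_zero.mp this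
    have huKsurj : Function.Surjective uK := by
      intro w
      obtain ⟨xb, rfl⟩ := (LinearMap.range σ).mkQ_surjective w
      have hkmem : xb - σ (π₂bar xb) ∈ K := by
        show π₂bar _ = 0
        rw [map_sub, hσ, sub_self]
      refine ⟨⟨xb - σ (π₂bar xb), hkmem⟩, ?_⟩
      rw [huK, LinearMap.comp_apply]
      show (LinearMap.range σ).mkQ (xb - σ (π₂bar xb)) = (LinearMap.range σ).mkQ xb
      rw [map_sub]
      have h0 : (LinearMap.range σ).mkQ (σ (π₂bar xb)) = 0 := by
        rw [Submodule.mkQ_apply, Submodule.Quotient.mk_eq_zero]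
        exact ⟨_, rfl⟩
      rw [h0, sub_zero]
    have eEF : (S.X₂ ⧸ Fsub) ≃ₗ[R] ((S.X₂ ⧸ N₂) ⧸ LinearMap.range σ) :=
      (Submodule.quotientQuotientEquivQuotient N₂ Fsub hN₂F).symm.trans
        (Submodule.quotEquivOfEq _ _ hmapFq)
    have zeq : (↥K) ≃ₗ[R] (S.X₂ ⧸ Fsub) :=
      (LinearEquiv.ofBijective uK ⟨huKinj, huKsurj⟩).trans eEF.symm
    have hEFmem : ModuleCat.of R (S.X₂ ⧸ Fsub) ∈ W₁ := h₁.iso_mem (zeq.toModuleIso) hKmem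
    -- final splitting 0 → Fsub → X₂ → X₂/Fsub → 0
    obtain ⟨a', b', hab', hannQ, hannF⟩ := ann_pair h₁ h₂ hzero hEFmem hFmem
    have hkerkill' : ∀ x : S.X₂, Fsub.mkQ x = 0 → b' • x = 0 := by
      intro x hx
      have hxF : x ∈ Fsub := by
        rwa [Submodule.mkQ_apply, Submodule.Quotient.mk_eq_zero] at hx
      exact congrArg Subtype.val (hannF ⟨x, hxF⟩)
    obtain ⟨σ', hσ'⟩ := exists_section Fsub.mkQ Fsub.mkQ_surjective a' b' hab'
      hkerkill' hannQ
    have efinal : (S.X₂ : Type u) ≃ₗ[R] ((S.X₂ ⧸ Fsub) × ↥Fsub) :=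
      ((sectionEquiv Fsub.mkQ σ' hσ').trans
        ((LinearEquiv.ofEq _ _ (Submodule.ker_mkQ Fsub)).prodCongr
          (LinearEquiv.refl R (S.X₂ ⧸ Fsub)))).trans
        (LinearEquiv.prodComm R (↥Fsub) (S.X₂ ⧸ Fsub))
    exact ⟨ModuleCat.of R (S.X₂ ⧸ Fsub), hEFmem, ModuleCat.of R ↥Fsub, hFmem, ⟨efinal⟩⟩
end

section
/- Let R be a commutative regular coherent ring and let A be a thick support of Spec(R) that is the union A = A_1 ∪ A_2 of two disjoint thick supports A_1 and A_2. Then every finitely presented R-module M with Supp(M) ⊆ A is isomorphic to a direct sum M_1 ⊕ M_2 of finitely presented R-modules with Supp(M_1) ⊆ A_1 and Supp(M_2) ⊆ A_2; that is, the wide subcategory W_A = { finitely presented M : Supp(M) ⊆ A } decomposes as W_A = W_{A_1} ⊔ W_{A_2}. -/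
open CategoryTheory Limits Opposite Pretriangulated DirectSum

universe u

section Thick

variable (R : Type u) [CommRing R]

/-- A *thick support* in `Spec R`: a union of Zariski closed sets `V(I)` with `I` a
finitely generated ideal. -/
def IsThickSupport (A : Set (PrimeSpectrum R)) : Prop :=
  ∃ 𝒮 : Set (Ideal R), (∀ I ∈ 𝒮, I.FG) ∧
    A = ⋃ I ∈ 𝒮, PrimeSpectrum.zeroLocus (I : Set R)

/-- A *specialization closed* subset of `Spec R`: a union of Zariski closed sets. -/
def IsSpclClosed (A : Set (PrimeSpectrum R)) : Prop :=
  ∃ 𝒮 : Set (Ideal R), A = ⋃ I ∈ 𝒮, PrimeSpectrum.zeroLocus (I : Set R)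

/-- An indecomposable thick support: nonempty and admitting no decomposition into two
disjoint nonempty thick supports. -/
def IsIndecompThickSupport (A : Set (PrimeSpectrum R)) : Prop :=
  IsThickSupport R A ∧ A.Nonempty ∧
  ∀ A₁ A₂ : Set (PrimeSpectrum R), IsThickSupport R A₁ → IsThickSupport R A₂ →
    Disjoint A₁ A₂ → A = A₁ ∪ A₂ → A₁ = ∅ ∨ A₂ = ∅

/-- An indecomposable specialization closed subset: nonempty and admitting no
decomposition into two disjoint nonempty specialization closed subsets. -/
def IsIndecompSpclClosed (A : Set (PrimeSpectrum R)) : Prop :=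
  IsSpclClosed R A ∧ A.Nonempty ∧
  ∀ A₁ A₂ : Set (PrimeSpectrum R), IsSpclClosed R A₁ → IsSpclClosed R A₂ →
    Disjoint A₁ A₂ → A = A₁ ∪ A₂ → A₁ = ∅ ∨ A₂ = ∅

/-- A Krull-Schmidt thick decomposition of a thick support `A`: a family of pairwise
disjoint indecomposable thick supports with union `A`, unique up to permutation. -/
def IsKSThickDecomp (A : Set (PrimeSpectrum R)) {ι : Type u}
    (𝒜 : ι → Set (PrimeSpectrum R)) : Prop :=
  (∀ i, IsIndecompThickSupport R (𝒜 i)) ∧ Pairwise (Function.onFun Disjoint 𝒜) ∧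
  (⋃ i, 𝒜 i) = A ∧
  ∀ (κ : Type u) (ℬ : κ → Set (PrimeSpectrum R)),
    (∀ k, IsIndecompThickSupport R (ℬ k)) → Pairwise (Function.onFun Disjoint ℬ) →
    (⋃ k, ℬ k) = A → ∃ σ : ι ≃ κ, ∀ i, 𝒜 i = ℬ (σ i)

end Thick

section Aux

open Filter in
lemma finite_subcover_zeroLocus {R : Type u} [CommRing R] (J : Ideal R)
    (𝒮 : Set (Ideal R)) (hfg : ∀ I ∈ 𝒮, I.FG)
    (hcov : PrimeSpectrum.zeroLocus (J : Set R) ⊆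
      ⋃ I ∈ 𝒮, PrimeSpectrum.zeroLocus (I : Set R)) :
    ∃ T : Finset (Ideal R), ↑T ⊆ 𝒮 ∧
      PrimeSpectrum.zeroLocus (J : Set R) ⊆
        ⋃ I ∈ T, PrimeSpectrum.zeroLocus (I : Set R) := by
  classical
  by_contra hcon
  push_neg at hcon
  have key : ∀ T : Finset 𝒮, ∃ p : PrimeSpectrum R, J ≤ p.asIdeal ∧
      ∀ i ∈ T, ¬ (i : Ideal R) ≤ p.asIdeal := by
    intro T
    have h := hcon (T.image Subtype.val)
      (by rw [Finset.coe_image]; exact Subtype.coe_image_subset _ _)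
    obtain ⟨p, hp1, hp2⟩ := Set.not_subset.mp h
    refine ⟨p, SetLike.coe_subset_coe.mp ((PrimeSpectrum.mem_zeroLocus _ _).mp hp1), ?_⟩
    intro i hi hle
    apply hp2
    refine Set.mem_iUnion₂.mpr ⟨(i : Ideal R), Finset.mem_image_of_mem _ hi, ?_⟩
    rwa [PrimeSpectrum.mem_zeroLocus, SetLike.coe_subset_coe]
  choose p hpJ hpT using key
  set 𝒰 : Ultrafilter (Finset 𝒮) := Ultrafilter.of atTop with h𝒰
  have hof : (𝒰 : Filter (Finset 𝒮)) ≤ atTop := Ultrafilter.of_le _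
  set P : Ideal R :=
    { carrier := {x | {T | x ∈ (p T).asIdeal} ∈ 𝒰}
      zero_mem' := by
        refine Filter.mem_of_superset Filter.univ_mem ?_
        intro T _; exact (p T).asIdeal.zero_mem
      add_mem' := by
        intro x y hx hy
        refine Filter.mem_of_superset (Filter.inter_mem hx hy) ?_
        rintro T ⟨h1, h2⟩; exact (p T).asIdeal.add_mem h1 h2
      smul_mem' := by
        intro c x hx
        refine Filter.mem_of_superset hx ?_
        intro T h; exact (p T).asIdeal.smul_mem c h } with hP
  have hmemP : ∀ x : R, x ∈ P ↔ {T | x ∈ (p T).asIdeal} ∈ 𝒰 := fun x => Iff.rfl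
  have hPprime : P.IsPrime := by
    constructor
    · intro h
      have h1 : (1 : R) ∈ P := h ▸ Submodule.mem_top
      rw [hmemP] at h1
      have h2 : {T : Finset 𝒮 | (1:R) ∈ (p T).asIdeal} = ∅ := by
        ext T
        simp only [Set.mem_setOf_eq, Set.mem_empty_iff_false, iff_false]
        exact fun hh => (p T).isPrime.ne_top ((Ideal.eq_top_iff_one _).mpr hh)
      rw [h2] at h1
      exact Filter.empty_notMem (𝒰 : Filter (Finset 𝒮)) h1
    · intro x y hxy
      rw [hmemP] at hxy
      have hsub : {T : Finset 𝒮 | x * y ∈ (p T).asIdeal} ⊆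
          {T | x ∈ (p T).asIdeal} ∪ {T | y ∈ (p T).asIdeal} := by
        intro T hT; exact (p T).isPrime.mem_or_mem hT
      exact Ultrafilter.union_mem_iff.mp (Filter.mem_of_superset hxy hsub)
  have hJP : J ≤ P := by
    intro x hx
    exact Filter.mem_of_superset Filter.univ_mem (fun T _ => hpJ T hx)
  have hnotP : ∀ I ∈ 𝒮, ¬ I ≤ P := by
    intro I hI hle
    obtain ⟨s, hs⟩ := hfg I hI
    have hmem : {T : Finset 𝒮 | (⟨I, hI⟩ : 𝒮) ∈ T} ∈ 𝒰 := by
      apply hof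
      refine Filter.mem_of_superset (Filter.mem_atTop {⟨I, hI⟩}) ?_
      intro T hT; exact Finset.singleton_subset_iff.mp hT
    have hsub : {T : Finset 𝒮 | (⟨I, hI⟩ : 𝒮) ∈ T} ⊆
        ⋃ g ∈ (s : Set R), {T | g ∉ (p T).asIdeal} := by
      intro T hT
      have hnle : ¬ I ≤ (p T).asIdeal := hpT T ⟨I, hI⟩ hT
      have hex : ∃ g ∈ (s : Set R), g ∉ (p T).asIdeal := by
        by_contra h
        push_neg at h
        exact hnle (by rw [← hs, Ideal.span_le]; exact h)
      obtain ⟨g, hgs, hgn⟩ := hex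
      exact Set.mem_iUnion₂.mpr ⟨g, hgs, hgn⟩
    have hbig : (⋃ g ∈ (s : Set R), {T : Finset 𝒮 | g ∉ (p T).asIdeal}) ∈ 𝒰 :=
      Filter.mem_of_superset hmem hsub
    obtain ⟨g, hgs, hgU⟩ := (Ultrafilter.finite_biUnion_mem_iff s.finite_toSet).mp hbig
    have hgP : g ∈ P := hle (hs ▸ Ideal.subset_span hgs)
    rw [hmemP] at hgP
    have hcompl : {T : Finset 𝒮 | g ∈ (p T).asIdeal}ᶜ ∈ 𝒰 := hgU
    exact (Ultrafilter.compl_mem_iff_notMem.mp hcompl) hgP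
  have hmem2 : (⟨P, hPprime⟩ : PrimeSpectrum R) ∈
      ⋃ I ∈ 𝒮, PrimeSpectrum.zeroLocus (I : Set R) :=
    hcov ((PrimeSpectrum.mem_zeroLocus _ _).mpr (SetLike.coe_subset_coe.mpr hJP))
  obtain ⟨I, hI, hle⟩ := Set.mem_iUnion₂.mp hmem2
  exact hnotP I hI (SetLike.coe_subset_coe.mp ((PrimeSpectrum.mem_zeroLocus _ _).mp hle))

end Aux

/-- **Decomposition of modules along a disjoint decomposition of a thick support
(Proposition prop:1).** Let `R` be a commutative regular coherent ring and let
`A = A₁ ∪ A₂` be a thick support of `Spec R` written as the union of two disjoint thick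
supports. Then every finitely presented `R`-module `M` with `Supp M ⊆ A` is isomorphic
to a direct sum `M₁ ⊕ M₂` of finitely presented modules with `Supp M₁ ⊆ A₁` and
`Supp M₂ ⊆ A₂`; that is, `W_A = W_{A₁} ⊔ W_{A₂}`. -/
theorem wide_decomp_of_thick_support_decomp (R : Type u) [CommRing R]
    (hcoh : IsCoherentRing R) (hreg : IsRegularRing' R)
    (A A₁ A₂ : Set (PrimeSpectrum R)) (hA : IsThickSupport R A)
    (h₁ : IsThickSupport R A₁) (h₂ : IsThickSupport R A₂)
    (hdisj : Disjoint A₁ A₂) (hunion : A = A₁ ∪ A₂) :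
    ∀ M : ModuleCat.{u} R, Module.FinitePresentation R M → Module.support R M ⊆ A →
      ∃ M₁ M₂ : ModuleCat.{u} R,
        Module.FinitePresentation R M₁ ∧ Module.FinitePresentation R M₂ ∧
        Module.support R M₁ ⊆ A₁ ∧ Module.support R M₂ ⊆ A₂ ∧
        Nonempty (M ≃ₗ[R] M₁ × M₂) := by
    classical
  intro M hM hsupp
  obtain ⟨𝒮₁, hfg₁, hA₁e⟩ := h₁
  obtain ⟨𝒮₂, hfg₂, hA₂e⟩ := h₂
  haveI : Module.FinitePresentation R M := hM
  haveI : Module.Finite R M := inferInstance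
  set N := Module.annihilator R M with hNdef
  have hsuppN : Module.support R M = PrimeSpectrum.zeroLocus (N : Set R) :=
    Module.support_eq_zeroLocus
  have hcov : PrimeSpectrum.zeroLocus (N : Set R) ⊆
      ⋃ I ∈ 𝒮₁ ∪ 𝒮₂, PrimeSpectrum.zeroLocus (I : Set R) := by
    rw [Set.biUnion_union, ← hA₁e, ← hA₂e, ← hunion, ← hsuppN]
    exact hsupp
  obtain ⟨T, hT𝒮, hTcov⟩ := finite_subcover_zeroLocus N (𝒮₁ ∪ 𝒮₂)
    (fun I hI => hI.elim (hfg₁ I) (hfg₂ I)) hcov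
  set T₁ : Finset (Ideal R) := T.filter (· ∈ 𝒮₁) with hT₁def
  set T₂ : Finset (Ideal R) := T.filter (· ∉ 𝒮₁) with hT₂def
  have hT₁S : ∀ I ∈ T₁, I ∈ 𝒮₁ := fun I hI => (Finset.mem_filter.mp hI).2
  have hT₂S : ∀ I ∈ T₂, I ∈ 𝒮₂ := by
    intro I hI
    obtain ⟨hIT, hIn⟩ := Finset.mem_filter.mp hI
    exact (hT𝒮 hIT).resolve_left hIn
  set q₁ : Ideal R := T₁.prod id with hq₁def
  set q₂ : Ideal R := T₂.prod id with hq₂def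
  have hfgprod : ∀ (T' : Finset (Ideal R)), (∀ I ∈ T', I.FG) → (T'.prod id).FG := by
    intro T'
    induction T' using Finset.induction_on with
    | empty =>
      intro _
      rw [Finset.prod_empty]
      exact ⟨{1}, by rw [Ideal.one_eq_top, Finset.coe_singleton, Ideal.span_singleton_one]⟩
    | @insert I T' hIT ih =>
      intro h
      rw [Finset.prod_insert hIT]
      exact Submodule.FG.mul (h I (Finset.mem_insert_self _ _))
        (ih fun J hJ => h J (Finset.mem_insert_of_mem hJ))
  have hVq₁ : PrimeSpectrum.zeroLocus (q₁ : Set R) ⊆ A₁ := by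
    intro pp hpp
    have hle : q₁ ≤ pp.asIdeal :=
      SetLike.coe_subset_coe.mp ((PrimeSpectrum.mem_zeroLocus _ _).mp hpp)
    obtain ⟨I, hI, hle'⟩ := (pp.isPrime.prod_le).mp hle
    rw [hA₁e]
    exact Set.mem_iUnion₂.mpr ⟨I, hT₁S I hI,
      (PrimeSpectrum.mem_zeroLocus _ _).mpr (SetLike.coe_subset_coe.mpr hle')⟩
  have hVq₂ : PrimeSpectrum.zeroLocus (q₂ : Set R) ⊆ A₂ := by
    intro pp hpp
    have hle : q₂ ≤ pp.asIdeal :=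
      SetLike.coe_subset_coe.mp ((PrimeSpectrum.mem_zeroLocus _ _).mp hpp)
    obtain ⟨I, hI, hle'⟩ := (pp.isPrime.prod_le).mp hle
    rw [hA₂e]
    exact Set.mem_iUnion₂.mpr ⟨I, hT₂S I hI,
      (PrimeSpectrum.mem_zeroLocus _ _).mpr (SetLike.coe_subset_coe.mpr hle')⟩
  have hcovq : PrimeSpectrum.zeroLocus (N : Set R) ⊆
      PrimeSpectrum.zeroLocus ((q₁ * q₂ : Ideal R) : Set R) := by
    intro pp hpp
    obtain ⟨I, hIT, hle⟩ := Set.mem_iUnion₂.mp (hTcov hpp)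
    have hle' : I ≤ pp.asIdeal :=
      SetLike.coe_subset_coe.mp ((PrimeSpectrum.mem_zeroLocus _ _).mp hle)
    rw [PrimeSpectrum.mem_zeroLocus]
    refine SetLike.coe_subset_coe.mpr ?_
    by_cases hI1 : I ∈ 𝒮₁
    · have : I ∈ T₁ := Finset.mem_filter.mpr ⟨hIT, hI1⟩
      calc q₁ * q₂ ≤ q₁ := Ideal.mul_le_left
        _ ≤ T₁.inf id := Ideal.prod_le_inf
        _ ≤ I := Finset.inf_le this
        _ ≤ pp.asIdeal := hle'
    · have : I ∈ T₂ := Finset.mem_filter.mpr ⟨hIT, hI1⟩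
      calc q₁ * q₂ ≤ q₂ := Ideal.mul_le_right
        _ ≤ T₂.inf id := Ideal.prod_le_inf
        _ ≤ I := Finset.inf_le this
        _ ≤ pp.asIdeal := hle'
  have hrad : q₁ * q₂ ≤ N.radical :=
    (PrimeSpectrum.zeroLocus_subset_zeroLocus_iff _ _).mp hcovq
  obtain ⟨n, hpow⟩ := Ideal.exists_pow_le_of_le_radical_of_fg hrad
    (Submodule.FG.mul (hfgprod T₁ fun I hI => hfg₁ I (hT₁S I hI))
      (hfgprod T₂ fun I hI => hfg₂ I (hT₂S I hI)))
  have hpow' : (q₁ * q₂) ^ (n + 1) ≤ N :=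
    le_trans (Ideal.pow_le_pow_right (Nat.le_succ n)) hpow
  set a : Ideal R := N ⊔ q₁ ^ (n + 1) with hadef
  set b : Ideal R := N ⊔ q₂ ^ (n + 1) with hbdef
  have habN : a * b ≤ N := by
    rw [Ideal.sup_mul, Ideal.mul_sup, Ideal.mul_sup]
    refine sup_le (sup_le Ideal.mul_le_left Ideal.mul_le_left) (sup_le Ideal.mul_le_right ?_)
    rw [← mul_pow]
    exact hpow'
  have hVa : PrimeSpectrum.zeroLocus (a : Set R) ⊆ A₁ := by
    refine subset_trans (PrimeSpectrum.zeroLocus_anti_mono_ideal le_sup_right) ?_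
    rw [PrimeSpectrum.zeroLocus_pow _ (Nat.succ_ne_zero n)]
    exact hVq₁
  have hVb : PrimeSpectrum.zeroLocus (b : Set R) ⊆ A₂ := by
    refine subset_trans (PrimeSpectrum.zeroLocus_anti_mono_ideal le_sup_right) ?_
    rw [PrimeSpectrum.zeroLocus_pow _ (Nat.succ_ne_zero n)]
    exact hVq₂
  have htop : a ⊔ b = ⊤ := by
    rw [← PrimeSpectrum.zeroLocus_empty_iff_eq_top, PrimeSpectrum.zeroLocus_sup]
    exact Set.subset_empty_iff.mp
      (subset_trans (Set.inter_subset_inter hVa hVb)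
        (Set.disjoint_iff_inter_eq_empty.mp hdisj).subset)
  obtain ⟨u, hu, v, hv, huv⟩ := Submodule.mem_sup.mp
    (show (1 : R) ∈ a ⊔ b by rw [htop]; trivial)
  have hkill : ∀ (r s : R), r ∈ a → s ∈ b → ∀ x : M, (r * s) • x = 0 := by
    intro r s hr hs x
    exact Module.mem_annihilator.mp (habN (Ideal.mul_mem_mul hr hs)) x
  have hid : ∀ x : M, u • x + v • x = x := by
    intro x; rw [← add_smul, huv, one_smul]
  have hee : ∀ x : M, u • (u • x) = u • x := by
    intro x
    have h1 : u • (v • x) = 0 := by rw [smul_smul]; exact hkill u v hu hv x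
    calc u • (u • x) = u • (u • x) + u • (v • x) := by rw [h1, add_zero]
      _ = u • (u • x + v • x) := (smul_add u _ _).symm
      _ = u • x := by rw [hid x]
  let e : M →ₗ[R] M := u • (LinearMap.id : M →ₗ[R] M)
  have he : ∀ x : M, e x = u • x := fun x => rfl
  set K : Submodule R M := LinearMap.ker e with hKdef
  set Q : Submodule R M := LinearMap.range e with hQdef
  have hKmem : ∀ x : M, x ∈ K ↔ u • x = 0 := fun x => Iff.rfl
  have hQmem : ∀ x : M, x ∈ Q → u • x = x := by
    rintro x ⟨y, rfl⟩
    exact hee y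
  have hvK : ∀ x : M, v • x ∈ K := by
    intro x
    rw [hKmem, smul_smul]
    exact hkill u v hu hv x
  have hcompl : IsCompl K Q := by
    constructor
    · rw [disjoint_iff_inf_le]
      intro x ⟨hxK, hxQ⟩
      have h0 : u • x = 0 := (hKmem x).mp hxK
      rw [← hQmem x hxQ, h0]
      exact Submodule.zero_mem ⊥
    · rw [codisjoint_iff_le_sup]
      intro x _
      refine Submodule.mem_sup.mpr ⟨v • x, hvK x, u • x, ⟨x, rfl⟩, ?_⟩
      rw [add_comm]; exact hid x
  -- a kills K, b kills Q
  have haK : ∀ s ∈ a, ∀ x : M, x ∈ K → s • x = 0 := by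
    intro s hs x hx
    have h0 : u • x = 0 := (hKmem x).mp hx
    calc s • x = s • (u • x) + s • (v • x) := by rw [← smul_add, hid x]
      _ = 0 := by rw [h0, smul_zero, zero_add, smul_smul]; exact hkill s v hs hv x
  have hbQ : ∀ s ∈ b, ∀ x : M, x ∈ Q → s • x = 0 := by
    intro s hs x hx
    calc s • x = s • (u • x) := by rw [hQmem x hx]
      _ = (s * u) • x := smul_smul s u x
      _ = 0 := by rw [mul_comm]; exact hkill u s hu hs x
  have hsuppK : Module.support R (ModuleCat.of R K) ⊆ A₁ := by
    intro pp hpp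
    apply hVa
    rw [PrimeSpectrum.mem_zeroLocus]
    intro s hs
    refine Module.annihilator_le_of_mem_support hpp ?_
    rw [Module.mem_annihilator]
    show ∀ m : K, s • m = 0
    exact fun m => Subtype.ext (haK s hs m.1 m.2)
  have hsuppQ : Module.support R (ModuleCat.of R Q) ⊆ A₂ := by
    intro pp hpp
    apply hVb
    rw [PrimeSpectrum.mem_zeroLocus]
    intro s hs
    refine Module.annihilator_le_of_mem_support hpp ?_
    rw [Module.mem_annihilator]
    show ∀ m : Q, s • m = 0
    exact fun m => Subtype.ext (hbQ s hs m.1 m.2)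
  -- finiteness
  have hfgQ : Q.FG := by
    rw [hQdef, LinearMap.range_eq_map]
    exact Submodule.FG.map e (Module.finite_def.mp ‹Module.Finite R M›)
  let f : M →ₗ[R] M := LinearMap.id - e
  have hf : ∀ x : M, f x = x - u • x := fun x => rfl
  have hKrange : K = LinearMap.range f := by
    ext x
    constructor
    · intro hx
      exact ⟨x, by rw [hf, (hKmem x).mp hx, sub_zero]⟩
    · rintro ⟨y, rfl⟩
      rw [hKmem, hf, smul_sub, hee y, sub_self]
  have hfgK : K.FG := by
    rw [hKrange, LinearMap.range_eq_map]
    exact Submodule.FG.map _ (Module.finite_def.mp ‹Module.Finite R M›)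
  have hfpQ : Module.FinitePresentation R Q :=
    Module.finitePresentation_of_surjective e.rangeRestrict
      (LinearMap.surjective_rangeRestrict e)
      (by rw [LinearMap.ker_rangeRestrict]; exact hfgK)
  have hmemK : ∀ x : M, f x ∈ K := by
    intro x
    rw [hKmem, hf, smul_sub, hee x, sub_self]
  have hπker : LinearMap.ker (f.codRestrict K hmemK) = Q := by
    ext x
    rw [LinearMap.ker_codRestrict, LinearMap.mem_ker, hf, sub_eq_zero]
    constructor
    · intro hx
      exact ⟨x, hx.symm⟩
    · intro hx
      exact (hQmem x hx).symm
  have hπsurj : Function.Surjective (f.codRestrict K hmemK) := by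
    intro x
    refine ⟨(x : M), Subtype.ext ?_⟩
    show f (x : M) = (x : M)
    rw [hf, (hKmem _).mp x.2, sub_zero]
  have hfpK : Module.FinitePresentation R K :=
    Module.finitePresentation_of_surjective _ hπsurj (hπker ▸ hfgQ)
  exact ⟨ModuleCat.of R K, ModuleCat.of R Q, hfpK, hfpQ, hsuppK, hsuppQ,
    ⟨(Submodule.prodEquivOfIsCompl K Q hcompl).symm⟩⟩
end

section
/- Let R be a commutative noetherian ring and let A be a specialization closed subset of Spec(R), i.e., a union of Zariski closed subsets. Then A admits a Krull-Schmidt thick decomposition: there is a family (A_k) of pairwise disjoint, nonempty, indecomposable specialization closed subsets with A = ⋃ A_k, and any such family is unique up to permutation of the pieces. -/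
open CategoryTheory Limits Opposite Pretriangulated DirectSum

universe u

section KSAux

variable {R : Type u} [CommRing R]

/-- Membership form of specialization closedness. -/
def SpclMem (A : Set (PrimeSpectrum R)) : Prop :=
  ∀ p ∈ A, ∀ q : PrimeSpectrum R, p.asIdeal ≤ q.asIdeal → q ∈ A

lemma isSpclClosed_iff_spclMem (A : Set (PrimeSpectrum R)) :
    IsSpclClosed R A ↔ SpclMem A := by
  constructor
  · rintro ⟨𝒮, rfl⟩ p hp q hq
    simp only [Set.mem_iUnion] at hp ⊢
    obtain ⟨I, hI, hpI⟩ := hp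
    refine ⟨I, hI, ?_⟩
    rw [PrimeSpectrum.mem_zeroLocus] at hpI ⊢
    exact hpI.trans hq
  · intro h
    refine ⟨(fun p : PrimeSpectrum R => p.asIdeal) '' A, ?_⟩
    ext q
    simp only [Set.mem_iUnion, Set.mem_image]
    constructor
    · intro hq
      exact ⟨q.asIdeal, ⟨q, hq, rfl⟩, by rw [PrimeSpectrum.mem_zeroLocus]⟩
    · rintro ⟨I, ⟨p, hp, rfl⟩, hpq⟩
      rw [PrimeSpectrum.mem_zeroLocus] at hpq
      exact h p hp q (SetLike.coe_subset_coe.mp hpq)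

lemma chain_absorb {A : Set (PrimeSpectrum R)} {κ : Type*}
    {ℬ : κ → Set (PrimeSpectrum R)}
    (hB : ∀ k, SpclMem (ℬ k)) (hdisj : Pairwise (Function.onFun Disjoint ℬ))
    (hcov : ∀ p ∈ A, ∃ k, p ∈ ℬ k) {x y : ↥A}
    (h : Relation.EqvGen
      (fun x y : ↥A => x.1.asIdeal ≤ y.1.asIdeal ∨ y.1.asIdeal ≤ x.1.asIdeal) x y) :
    ∀ k, x.1 ∈ ℬ k ↔ y.1 ∈ ℬ k := by
  have uniq : ∀ (p : PrimeSpectrum R) (k k' : κ), p ∈ ℬ k → p ∈ ℬ k' → k = k' := by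
    intro p k k' hk hk'
    by_contra hne
    exact (Set.disjoint_left.1 (hdisj hne)) hk hk'
  have step : ∀ a b : ↥A, a.1.asIdeal ≤ b.1.asIdeal → ∀ k, a.1 ∈ ℬ k → b.1 ∈ ℬ k :=
    fun a b hab k ha => hB k a.1 ha b.1 hab
  have step' : ∀ a b : ↥A, b.1.asIdeal ≤ a.1.asIdeal → ∀ k, a.1 ∈ ℬ k → b.1 ∈ ℬ k := by
    intro a b hab k ha
    obtain ⟨j, hj⟩ := hcov b.1 b.2
    have haj : a.1 ∈ ℬ j := hB j b.1 hj a.1 hab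
    rwa [uniq a.1 k j ha haj]
  induction h with
  | rel a b hab =>
      intro k
      rcases hab with hab | hab
      · exact ⟨step a b hab k, step' b a hab k⟩
      · exact ⟨step' a b hab k, step b a hab k⟩
  | refl a => exact fun k => Iff.rfl
  | symm a b _ ih => exact fun k => (ih k).symm
  | trans a b c _ _ ih1 ih2 => exact fun k => (ih1 k).trans (ih2 k)

end KSAux

/-- **Krull-Schmidt decomposition of specialization closed subsets (Proposition
prop:graph).** Let `R` be a commutative noetherian ring and `A` a specialization closed
subset of `Spec R` (a union of Zariski closed subsets). Then `A` admits a Krull-Schmidt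
thick decomposition: there is a family of pairwise disjoint, nonempty, indecomposable
specialization closed subsets with union `A`, and any such family is unique up to
permutation of the pieces. -/
theorem spclClosed_KS_decomp (R : Type u) [CommRing R] [IsNoetherianRing R]
    (A : Set (PrimeSpectrum R)) (hA : IsSpclClosed R A) :
    ∃ (ι : Type u) (𝒜 : ι → Set (PrimeSpectrum R)),
      (∀ i, IsIndecompSpclClosed R (𝒜 i)) ∧
      Pairwise (Function.onFun Disjoint 𝒜) ∧
      (⋃ i, 𝒜 i) = A ∧
      ∀ (κ : Type u) (ℬ : κ → Set (PrimeSpectrum R)),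
        (∀ k, IsIndecompSpclClosed R (ℬ k)) → Pairwise (Function.onFun Disjoint ℬ) →
        (⋃ k, ℬ k) = A → ∃ σ : ι ≃ κ, ∀ i, 𝒜 i = ℬ (σ i) := by
  rw [isSpclClosed_iff_spclMem] at hA
  let r : ↥A → ↥A → Prop :=
    fun x y => x.1.asIdeal ≤ y.1.asIdeal ∨ y.1.asIdeal ≤ x.1.asIdeal
  let 𝒜 : Quot r → Set (PrimeSpectrum R) :=
    fun c => {p | ∃ h : p ∈ A, Quot.mk r ⟨p, h⟩ = c}
  have hsub : ∀ c, 𝒜 c ⊆ A := fun c p hp => hp.1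
  have hmem : ∀ x : ↥A, x.1 ∈ 𝒜 (Quot.mk r x) := fun x => ⟨x.2, rfl⟩
  have hAmem : ∀ {p : PrimeSpectrum R} {c : Quot r}, p ∈ 𝒜 c →
      ∀ (h : p ∈ A), Quot.mk r ⟨p, h⟩ = c := by
    rintro p c ⟨h', rfl⟩ h
    rfl
  have classEq : ∀ {p : PrimeSpectrum R} {c c' : Quot r}, p ∈ 𝒜 c → p ∈ 𝒜 c' → c = c' := by
    rintro p c c' ⟨h, rfl⟩ hc'
    exact hAmem hc' h
  have hspcl : ∀ c, SpclMem (𝒜 c) := by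
    rintro c p ⟨h, rfl⟩ q hq
    exact ⟨hA p h q hq, (Quot.sound (show r ⟨p, h⟩ ⟨q, hA p h q hq⟩ from Or.inl hq)).symm⟩
  have hne : ∀ c, (𝒜 c).Nonempty := by
    intro c
    obtain ⟨x, rfl⟩ := Quot.exists_rep c
    exact ⟨x.1, hmem x⟩
  have hcupA : (⋃ c, 𝒜 c) = A := by
    ext p
    constructor
    · intro hp
      obtain ⟨c, hc⟩ := Set.mem_iUnion.1 hp
      exact hsub c hc
    · intro hp
      exact Set.mem_iUnion.2 ⟨Quot.mk r ⟨p, hp⟩, hp, rfl⟩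
  have hdisjA : Pairwise (Function.onFun Disjoint 𝒜) := by
    intro c c' hne'
    rw [Function.onFun, Set.disjoint_left]
    intro p hp hp'
    exact hne' (classEq hp hp')
  have hcompl : ∀ (B : Set (PrimeSpectrum R)), SpclMem B → B ⊆ A → ∀ c,
      SpclMem (B \ 𝒜 c) := by
    rintro B hB hBA c p ⟨hpB, hpc⟩ q hq
    refine ⟨hB p hpB q hq, fun hqc => hpc ?_⟩
    obtain ⟨hq', hq'c⟩ := hqc
    exact ⟨hBA hpB, (Quot.sound (show r ⟨p, hBA hpB⟩ ⟨q, hq'⟩ from Or.inl hq)).trans hq'c⟩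
  have hindec : ∀ c, IsIndecompSpclClosed R (𝒜 c) := by
    intro c
    refine ⟨(isSpclClosed_iff_spclMem _).2 (hspcl c), hne c, ?_⟩
    intro A₁ A₂ h1 h2 hdisj hun
    rw [isSpclClosed_iff_spclMem] at h1 h2
    by_contra hcon
    push_neg at hcon
    obtain ⟨hne1, hne2⟩ := hcon
    obtain ⟨p, hp⟩ := hne1
    obtain ⟨q, hq⟩ := hne2
    have hp𝒜 : p ∈ 𝒜 c := hun ▸ Set.mem_union_left _ hp
    have hq𝒜 : q ∈ 𝒜 c := hun ▸ Set.mem_union_right _ hq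
    have hpA : p ∈ A := hsub c hp𝒜
    have hqA : q ∈ A := hsub c hq𝒜
    let ℬ' : Bool → Set (PrimeSpectrum R) := fun b => cond b A₁ (A₂ ∪ (A \ 𝒜 c))
    have hB' : ∀ b, SpclMem (ℬ' b) := by
      intro b
      cases b
      · rintro p' (hp' | hp') q' hq'
        · exact Or.inl (h2 p' hp' q' hq')
        · refine Or.inr ⟨hA p' hp'.1 q' hq', fun hq'c => hp'.2 ?_⟩
          obtain ⟨hh, hhc⟩ := hq'c
          exact ⟨hp'.1, (Quot.sound (show r ⟨p', hp'.1⟩ ⟨q', hh⟩ from Or.inl hq')).trans hhc⟩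
      · exact h1
    have hkey : Disjoint A₁ (A₂ ∪ (A \ 𝒜 c)) := by
      refine Set.disjoint_union_right.2 ⟨hdisj, ?_⟩
      rw [Set.disjoint_left]
      intro a ha ha'
      exact ha'.2 (hun ▸ Set.mem_union_left _ ha)
    have hdisj' : Pairwise (Function.onFun Disjoint ℬ') := by
      intro b b' hbb'
      match b, b' with
      | true, true => exact absurd rfl hbb'
      | false, false => exact absurd rfl hbb'
      | true, false => exact hkey
      | false, true => exact hkey.symm
    have hcov' : ∀ p' ∈ A, ∃ b, p' ∈ ℬ' b := by
      intro p' hp'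
      by_cases hc' : p' ∈ 𝒜 c
      · rcases (hun.symm ▸ hc' : p' ∈ A₁ ∪ A₂) with h | h
        · exact ⟨true, h⟩
        · exact ⟨false, Or.inl h⟩
      · exact ⟨false, Or.inr ⟨hp', hc'⟩⟩
    have hEq : Relation.EqvGen r ⟨p, hpA⟩ ⟨q, hqA⟩ := by
      apply Quot.eqvGen_exact
      rw [hAmem hp𝒜 hpA, hAmem hq𝒜 hqA]
    have hqA₁ : q ∈ ℬ' true := (chain_absorb hB' hdisj' hcov' hEq true).1 hp
    exact (Set.disjoint_left.1 hdisj hqA₁) hq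
  refine ⟨Quot r, 𝒜, hindec, hdisjA, hcupA, ?_⟩
  intro κ ℬ hind hdisjB hcupB
  have hBspcl : ∀ k, SpclMem (ℬ k) := fun k => (isSpclClosed_iff_spclMem _).1 (hind k).1
  have hBsub : ∀ k, ℬ k ⊆ A := fun k => hcupB ▸ Set.subset_iUnion ℬ k
  have hcov : ∀ p ∈ A, ∃ k, p ∈ ℬ k := by
    intro p hp
    rw [← hcupB] at hp
    exact Set.mem_iUnion.1 hp
  have uniqk : ∀ (p : PrimeSpectrum R) (k k' : κ), p ∈ ℬ k → p ∈ ℬ k' → k = k' := by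
    intro p k k' h1 h2
    by_contra hkk
    exact Set.disjoint_left.1 (hdisjB hkk) h1 h2
  have gwd : ∀ x y : ↥A, r x y →
      (hcov x.1 x.2).choose = (hcov y.1 y.2).choose := by
    intro x y hxy
    have hx := (hcov x.1 x.2).choose_spec
    have hy := (hcov y.1 y.2).choose_spec
    have := (chain_absorb hBspcl hdisjB hcov (Relation.EqvGen.rel x y hxy) _).1 hx
    exact uniqk y.1 _ _ this hy
  let f : Quot r → κ := Quot.lift (fun x => (hcov x.1 x.2).choose) gwd
  have fspec : ∀ x : ↥A, x.1 ∈ ℬ (f (Quot.mk r x)) := fun x => (hcov x.1 x.2).choose_spec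
  have classSub : ∀ c, 𝒜 c ⊆ ℬ (f c) := by
    rintro c p ⟨h, rfl⟩
    exact fspec ⟨p, h⟩
  have fEq : ∀ c, ℬ (f c) = 𝒜 c := by
    intro c
    rcases (hind (f c)).2.2 (𝒜 c) (ℬ (f c) \ 𝒜 c)
        ((isSpclClosed_iff_spclMem _).2 (hspcl c))
        ((isSpclClosed_iff_spclMem _).2 (hcompl _ (hBspcl _) (hBsub _) c))
        Set.disjoint_sdiff_right
        (Set.union_diff_cancel (classSub c)).symm with h | h
    · exact absurd h (Set.nonempty_iff_ne_empty.1 (hne c))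
    · refine le_antisymm ?_ (classSub c)
      intro p hp
      by_contra hpc
      exact (Set.eq_empty_iff_forall_notMem.1 h p) ⟨hp, hpc⟩
  have finj : Function.Injective f := by
    intro c c' hcc
    have h𝒜 : 𝒜 c = 𝒜 c' := by rw [← fEq c, ← fEq c', hcc]
    obtain ⟨p, hp⟩ := hne c
    exact classEq hp (h𝒜 ▸ hp)
  have fsurj : Function.Surjective f := by
    intro k
    obtain ⟨p, hp⟩ := (hind k).2.1
    have hpA : p ∈ A := hBsub k hp
    exact ⟨Quot.mk r ⟨p, hpA⟩, uniqk p _ k (fspec ⟨p, hpA⟩) hp⟩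
  exact ⟨Equiv.ofBijective f ⟨finj, fsurj⟩, fun c => (fEq c).symm⟩
end

section
/- Let R be a commutative noetherian ring and M a finitely generated R-module. Then M admits a splitting M ≅ ⊕_{i=1}^n M_i for some n, where the supports Supp(M_i) are pairwise disjoint and each Supp(M_i) is indecomposable (nonempty and not a union of two disjoint nonempty specialization closed sets); moreover such a splitting is unique up to isomorphism and permutation of the summands. -/
open CategoryTheory Limits Opposite Pretriangulated DirectSum

universe u

namespace SplitAux

open DirectSum

variable {R : Type u} [CommRing R]

lemma isSpclClosed_iff {A : Set (PrimeSpectrum R)} :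
    IsSpclClosed R A ↔ ∀ p ∈ A, PrimeSpectrum.zeroLocus (p.asIdeal : Set R) ⊆ A := by
  constructor
  · rintro ⟨𝒮, rfl⟩ p hp q hq
    rw [Set.mem_iUnion₂] at hp ⊢
    obtain ⟨I, hI, hpI⟩ := hp
    rw [PrimeSpectrum.mem_zeroLocus] at hpI
    rw [PrimeSpectrum.mem_zeroLocus] at hq
    exact ⟨I, hI, (PrimeSpectrum.mem_zeroLocus _ _).mpr fun x hx => hq (hpI hx)⟩
  · intro h
    refine ⟨PrimeSpectrum.asIdeal '' A, ?_⟩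
    ext q
    rw [Set.mem_iUnion₂]
    constructor
    · intro hq
      exact ⟨q.asIdeal, ⟨q, hq, rfl⟩, (PrimeSpectrum.mem_zeroLocus _ _).mpr subset_rfl⟩
    · rintro ⟨I, ⟨p, hp, rfl⟩, hq⟩
      exact h p hp hq

lemma isSpclClosed_iUnion {ι : Sort*} {A : ι → Set (PrimeSpectrum R)}
    (h : ∀ i, IsSpclClosed R (A i)) : IsSpclClosed R (⋃ i, A i) := by
  rw [isSpclClosed_iff]
  intro p hp
  obtain ⟨i, hi⟩ := Set.mem_iUnion.mp hp
  exact ((isSpclClosed_iff.mp (h i)) p hi).trans (Set.subset_iUnion A i)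

lemma isSpclClosed_inter {A B : Set (PrimeSpectrum R)} (hA : IsSpclClosed R A)
    (hB : IsSpclClosed R B) : IsSpclClosed R (A ∩ B) := by
  rw [isSpclClosed_iff] at *
  intro p hp
  exact Set.subset_inter (hA p hp.1) (hB p hp.2)

lemma isSpclClosed_zeroLocus (I : Ideal R) :
    IsSpclClosed R (PrimeSpectrum.zeroLocus (I : Set R)) :=
  ⟨{I}, by simp⟩

lemma smul_eq_zero_of (Q : Type u) [AddCommGroup Q] [Module R Q] (ε δ : R)
    (hmul : ε * δ ∈ Module.annihilator R Q)
    (hsupp : ∀ p ∈ Module.support R Q, ε ∉ p.asIdeal) (q : Q) : δ • q = 0 := by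
  set N := LinearMap.range (LinearMap.lsmul R Q δ) with hN
  have hann : ε ∈ Module.annihilator R N := by
    rw [Module.mem_annihilator]
    rintro ⟨x, hx⟩
    obtain ⟨y, rfl⟩ := hx
    apply Subtype.ext
    show ε • (LinearMap.lsmul R Q δ y) = 0
    rw [LinearMap.lsmul_apply, ← mul_smul]
    exact Module.mem_annihilator.mp hmul y
  have hempty : Module.support R N = ∅ := by
    rw [Set.eq_empty_iff_forall_notMem]
    intro p hp
    have h1 : ε ∈ p.asIdeal := Module.annihilator_le_of_mem_support hp hann
    have h2 : p ∈ Module.support R Q :=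
      Module.support_subset_of_injective N.subtype N.injective_subtype hp
    exact hsupp p h2 h1
  have := Module.support_eq_empty_iff.mp hempty
  have h0 : (⟨δ • q, ⟨q, rfl⟩⟩ : N) = ⟨0, N.zero_mem⟩ := Subsingleton.elim _ _
  simpa using congrArg Subtype.val h0

lemma support_range_lsmul_subset (Q : Type u) [AddCommGroup Q] [Module R Q] (ε δ : R)
    (hmul : δ * ε ∈ Module.annihilator R Q) :
    Module.support R (LinearMap.range (LinearMap.lsmul R Q ε)) ⊆
      Module.support R Q ∩ {p | δ ∈ p.asIdeal} := by
  intro p hp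
  refine ⟨Module.support_subset_of_injective _ (Submodule.injective_subtype _) hp, ?_⟩
  apply Module.annihilator_le_of_mem_support hp
  rw [Module.mem_annihilator]
  rintro ⟨x, hx⟩
  obtain ⟨y, rfl⟩ := hx
  apply Subtype.ext
  show δ • (LinearMap.lsmul R Q ε y) = 0
  rw [LinearMap.lsmul_apply, ← mul_smul]
  exact Module.mem_annihilator.mp hmul y

lemma support_directSum {ι : Type*} [Fintype ι] [DecidableEq ι] (P : ι → Type u)
    [∀ i, AddCommGroup (P i)] [∀ i, Module R (P i)] :
    Module.support R (⨁ i, P i) = ⋃ i, Module.support R (P i) := by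
  apply subset_antisymm
  · intro p hp
    by_contra hc
    simp only [Set.mem_iUnion, not_exists] at hc
    rw [Module.mem_support_iff'] at hp
    obtain ⟨x, hx⟩ := hp
    have h : ∀ i, ∃ r ∉ p.asIdeal, r • (x i) = 0 := fun i =>
      (Module.notMem_support_iff'.mp (hc i)) (x i)
    choose r hr hr0 using h
    refine hx (∏ i, r i) (Submonoid.prod_mem p.asIdeal.primeCompl fun i _ => hr i) ?_
    refine DFinsupp.ext fun i => ?_
    rw [DFinsupp.smul_apply, ← Finset.mul_prod_erase Finset.univ r (Finset.mem_univ i),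
      mul_comm, mul_smul, hr0 i, smul_zero]
    rfl
  · refine Set.iUnion_subset fun i => Module.support_subset_of_injective (DirectSum.lof R ι P i)
      fun a b hab => ?_
    have := congrArg (DirectSum.component R ι P i) hab
    simpa [DirectSum.component.lof_self] using this

lemma map_range_lsmul {M N : Type u} [AddCommGroup M] [Module R M] [AddCommGroup N] [Module R N]
    (f : M ≃ₗ[R] N) (ε : R) :
    Submodule.map (f : M →ₗ[R] N) (LinearMap.range (LinearMap.lsmul R M ε)) =
      LinearMap.range (LinearMap.lsmul R N ε) := by
  ext x
  simp only [Submodule.mem_map, LinearMap.mem_range, LinearMap.lsmul_apply]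
  constructor
  · rintro ⟨y, ⟨m, rfl⟩, rfl⟩
    exact ⟨f m, (map_smul f ε m).symm⟩
  · rintro ⟨n, rfl⟩
    exact ⟨ε • f.symm n, ⟨_, rfl⟩, by simp⟩

lemma range_lsmul_directSum {κ : Type*} [Fintype κ] [DecidableEq κ] (P : κ → Type u)
    [∀ k, AddCommGroup (P k)] [∀ k, Module R (P k)] (ε : R) (j : κ)
    (hj : ∀ y : P j, ε • y = y) (h0 : ∀ k, k ≠ j → ∀ y : P k, ε • y = 0) :
    LinearMap.range (LinearMap.lsmul R (⨁ k, P k) ε) =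
      LinearMap.range (DirectSum.lof R κ P j) := by
  apply le_antisymm
  · rintro _ ⟨x, rfl⟩
    refine ⟨x j, ?_⟩
    refine DFinsupp.ext fun k => ?_
    show (DirectSum.lof R κ P j (x j)) k = ε • x k
    by_cases hk : k = j
    · subst hk
      rw [DirectSum.lof_apply, hj]
    · rw [h0 k hk (x k)]
      rw [DirectSum.lof_eq_of, DirectSum.of_eq_of_ne _ _ _ hk]
  · rintro _ ⟨y, rfl⟩
    refine ⟨DirectSum.lof R κ P j y, ?_⟩
    show ε • (DirectSum.lof R κ P j y) = DirectSum.lof R κ P j y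
    refine DFinsupp.ext fun k => ?_
    rw [DFinsupp.smul_apply]
    by_cases hk : k = j
    · subst hk
      rw [DirectSum.lof_apply, hj]
    · rw [DirectSum.lof_eq_of, DirectSum.of_eq_of_ne _ _ _ hk, smul_zero]

noncomputable def decompEquiv {M : Type u} [AddCommGroup M] [Module R M]
    {ι : Type*} [Fintype ι] [DecidableEq ι] (ε : ι → R)
    (hsum : ∀ m : M, (∑ i, ε i) • m = m)
    (horth : ∀ i j, i ≠ j → ∀ m : M, (ε i * ε j) • m = 0)
    (hidem : ∀ i, ∀ m : M, (ε i * ε i) • m = ε i • m) :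
    M ≃ₗ[R] ⨁ i, LinearMap.range (LinearMap.lsmul R M (ε i)) := by
  refine LinearEquiv.ofLinear
    (∑ i, (DirectSum.lof R ι (fun i => LinearMap.range (LinearMap.lsmul R M (ε i))) i) ∘ₗ
      (LinearMap.lsmul R M (ε i)).rangeRestrict)
    (DirectSum.toModule R ι M (fun i => (LinearMap.range (LinearMap.lsmul R M (ε i))).subtype))
    ?_ ?_
  · refine DirectSum.linearMap_ext _ fun j => ?_
    ext x : 1
    obtain ⟨y, hy⟩ := x.2
    simp only [LinearMap.coe_comp, Function.comp_apply, DirectSum.toModule_lof,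
      LinearMap.sum_apply, LinearMap.id_comp]
    rw [Submodule.coe_subtype]
    rw [Finset.sum_eq_single_of_mem j (Finset.mem_univ j)]
    · refine congrArg _ ?_
      apply Subtype.ext
      show ε j • (x : M) = (x : M)
      rw [← hy]
      show ε j • (ε j • y) = ε j • y
      rw [← mul_smul]
      exact hidem j y
    · intro i _ hij
      have hz0 : ε i • (x : M) = 0 := by
        rw [← hy]
        show ε i • (ε j • y) = 0
        rw [← mul_smul]
        exact horth i j hij y
      have hz : (LinearMap.lsmul R M (ε i)).rangeRestrict (x : M) = 0 := by
        apply Subtype.ext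
        simpa using hz0
      rw [hz, map_zero]
  · ext m
    simp only [LinearMap.coe_comp, Function.comp_apply, LinearMap.sum_apply, LinearMap.id_apply,
      map_sum, DirectSum.toModule_lof]
    have h1 : ∀ i, (LinearMap.range (LinearMap.lsmul R M (ε i))).subtype
        ((LinearMap.lsmul R M (ε i)).rangeRestrict m) = ε i • m := fun i => rfl
    simp only [h1]
    rw [← Finset.sum_smul]
    exact hsum m

lemma ks_subset {A : Set (PrimeSpectrum R)} (hA : IsIndecompSpclClosed R A)
    {κ : Type*} (ℬ : κ → Set (PrimeSpectrum R)) (hs : ∀ k, IsSpclClosed R (ℬ k))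
    (hd : Pairwise (Function.onFun Disjoint ℬ)) (hsub : A ⊆ ⋃ k, ℬ k)
    {k : κ} (hne : (A ∩ ℬ k).Nonempty) : A ⊆ ℬ k := by
  obtain ⟨hAs, hAne, hind⟩ := hA
  have h1 : IsSpclClosed R (A ∩ ℬ k) := isSpclClosed_inter hAs (hs k)
  have h2 : IsSpclClosed R (A ∩ ⋃ (k') (_ : k' ≠ k), ℬ k') :=
    isSpclClosed_inter hAs (isSpclClosed_iUnion fun k' => isSpclClosed_iUnion fun _ => hs k')
  have hdisj : Disjoint (A ∩ ℬ k) (A ∩ ⋃ (k') (_ : k' ≠ k), ℬ k') := by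
    rw [Set.disjoint_left]
    rintro x ⟨hxA, hxk⟩ ⟨-, hx'⟩
    obtain ⟨k', hk', hxk'⟩ := Set.mem_iUnion₂.mp hx'
    exact Set.disjoint_left.mp (hd hk') hxk' hxk
  have hcover : A = (A ∩ ℬ k) ∪ (A ∩ ⋃ (k') (_ : k' ≠ k), ℬ k') := by
    ext x
    constructor
    · intro hx
      obtain ⟨k'', hk''⟩ := Set.mem_iUnion.mp (hsub hx)
      by_cases hkk : k'' = k
      · exact Or.inl ⟨hx, hkk ▸ hk''⟩
      · exact Or.inr ⟨hx, Set.mem_iUnion₂.mpr ⟨k'', hkk, hk''⟩⟩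
    · rintro (⟨hx, -⟩ | ⟨hx, -⟩) <;> exact hx
  rcases hind _ _ h1 h2 hdisj hcover with h | h
  · rw [h] at hne
    exact absurd hne (by simp)
  · intro x hx
    obtain ⟨k'', hk''⟩ := Set.mem_iUnion.mp (hsub hx)
    by_cases hkk : k'' = k
    · exact hkk ▸ hk''
    · exact absurd (Set.eq_empty_iff_forall_notMem.mp h x
        ⟨hx, Set.mem_iUnion₂.mpr ⟨k'', hkk, hk''⟩⟩) (fun hh => hh)

lemma ks_unique {ι : Type*} {κ : Type*} (𝒜 : ι → Set (PrimeSpectrum R))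
    (ℬ : κ → Set (PrimeSpectrum R))
    (h𝒜 : ∀ i, IsIndecompSpclClosed R (𝒜 i)) (hℬ : ∀ k, IsIndecompSpclClosed R (ℬ k))
    (hd𝒜 : Pairwise (Function.onFun Disjoint 𝒜)) (hdℬ : Pairwise (Function.onFun Disjoint ℬ))
    (huni : ⋃ i, 𝒜 i = ⋃ k, ℬ k) : ∃ σ : ι ≃ κ, ∀ i, 𝒜 i = ℬ (σ i) := by
  have inj𝒜 : ∀ a b : ι, 𝒜 a = 𝒜 b → a = b := by
    intro a b hab
    by_contra hne
    have hd := (hd𝒜 hne)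
    rw [Function.onFun, hab, disjoint_self] at hd
    exact absurd ((h𝒜 b).2.1) (by rw [hd]; simp)
  have injℬ : ∀ a b : κ, ℬ a = ℬ b → a = b := by
    intro a b hab
    by_contra hne
    have hd := (hdℬ hne)
    rw [Function.onFun, hab, disjoint_self] at hd
    exact absurd ((hℬ b).2.1) (by rw [hd]; simp)
  have key : ∀ i, ∃ k, 𝒜 i = ℬ k := by
    intro i
    obtain ⟨x, hx⟩ := (h𝒜 i).2.1
    have hx' : x ∈ ⋃ k, ℬ k := huni ▸ Set.mem_iUnion_of_mem i hx
    obtain ⟨k, hk⟩ := Set.mem_iUnion.mp hx'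
    have hAB : 𝒜 i ⊆ ℬ k := ks_subset (h𝒜 i) ℬ (fun k => (hℬ k).1) hdℬ
      (huni ▸ Set.subset_iUnion 𝒜 i) ⟨x, hx, hk⟩
    have hBA : ℬ k ⊆ 𝒜 i := ks_subset (hℬ k) 𝒜 (fun i => (h𝒜 i).1) hd𝒜
      (huni.symm ▸ Set.subset_iUnion ℬ k) ⟨x, hk, hx⟩
    exact ⟨k, subset_antisymm hAB hBA⟩
  have key' : ∀ k, ∃ i, ℬ k = 𝒜 i := by
    intro k
    obtain ⟨x, hx⟩ := (hℬ k).2.1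
    have hx' : x ∈ ⋃ i, 𝒜 i := huni.symm ▸ Set.mem_iUnion_of_mem k hx
    obtain ⟨i, hi⟩ := Set.mem_iUnion.mp hx'
    have hBA : ℬ k ⊆ 𝒜 i := ks_subset (hℬ k) 𝒜 (fun i => (h𝒜 i).1) hd𝒜
      (huni.symm ▸ Set.subset_iUnion ℬ k) ⟨x, hx, hi⟩
    have hAB : 𝒜 i ⊆ ℬ k := ks_subset (h𝒜 i) ℬ (fun k => (hℬ k).1) hdℬ
      (huni ▸ Set.subset_iUnion 𝒜 i) ⟨x, hi, hx⟩
    exact ⟨i, subset_antisymm hBA hAB⟩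
  choose σ hσ using key
  choose τ hτ using key'
  refine ⟨⟨σ, τ, fun i => ?_, fun k => ?_⟩, hσ⟩
  · exact inj𝒜 _ _ ((hτ (σ i)).symm.trans (hσ i).symm)
  · exact injℬ _ _ ((hσ (τ k)).symm.trans (hτ k).symm)

end SplitAux

/-- **Splitting of a finitely generated module into pieces with disjoint indecomposable
supports (Lemma cor:splittingformodules).** Let `R` be a commutative noetherian ring and
`M` a finitely generated `R`-module. Then `M ≅ ⊕_{i=1}^n Mᵢ` for some `n`, where the
supports of the `Mᵢ` are pairwise disjoint and indecomposable; moreover such a splitting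
is unique up to isomorphism and permutation of the summands. -/
theorem fg_module_splitting_disjoint_indecomp_supports (R : Type u) [CommRing R]
    [IsNoetherianRing R] (M : Type u) [AddCommGroup M] [Module R M]
    (hM : Module.Finite R M) :
    ∃ (n : ℕ) (N : Fin n → ModuleCat.{u} R),
      Nonempty (M ≃ₗ[R] ⨁ i, N i) ∧
      (∀ i j, i ≠ j → Disjoint (Module.support R (N i)) (Module.support R (N j))) ∧
      (∀ i, IsIndecompSpclClosed R (Module.support R (N i))) ∧
      ∀ (m : ℕ) (P : Fin m → ModuleCat.{u} R),
        Nonempty (M ≃ₗ[R] ⨁ j, P j) →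
        (∀ i j, i ≠ j → Disjoint (Module.support R (P i)) (Module.support R (P j))) →
        (∀ j, IsIndecompSpclClosed R (Module.support R (P j))) →
        ∃ σ : Fin n ≃ Fin m, ∀ i, Nonempty (N i ≃ₗ[R] P (σ i)) := by
  classical
  haveI := hM
  set I := Module.annihilator R M with hIdef
  -- the minimal primes over `I` form a finite set
  have hSfin : I.minimalPrimes.Finite := by
    rw [Ideal.minimalPrimes_eq_comap]
    exact (minimalPrimes.finite_of_isNoetherianRing (R ⧸ I)).image _
  haveI : Finite I.minimalPrimes := hSfin
  -- the combinatorial decomposition of `Supp M` into indecomposable pieces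
  let S := I.minimalPrimes
  let V : S → Set (PrimeSpectrum R) := fun p => PrimeSpectrum.zeroLocus (p.1 : Set R)
  let r : S → S → Prop := fun p q => (V p ∩ V q).Nonempty
  let st : Setoid S := Relation.EqvGen.setoid r
  let Qt := Quotient st
  haveI : Finite Qt := Quotient.finite st
  haveI : Fintype Qt := Fintype.ofFinite Qt
  let pt : S → PrimeSpectrum R := fun p => ⟨p.1, p.2.1.1⟩
  let A : Qt → Set (PrimeSpectrum R) := fun c => ⋃ (p : S) (_ : Quotient.mk st p = c), V p
  have hVsub : ∀ p : S, V p ⊆ PrimeSpectrum.zeroLocus (I : Set R) := fun p =>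
    PrimeSpectrum.zeroLocus_anti_mono p.2.1.2
  have hmemV : ∀ p : S, pt p ∈ V p := fun p => (PrimeSpectrum.mem_zeroLocus _ _).mpr subset_rfl
  have hmemA : ∀ (p : S) (c : Qt), Quotient.mk st p = c → ∀ x ∈ V p, x ∈ A c := by
    intro p c hp x hx
    exact Set.mem_iUnion₂.mpr ⟨p, hp, hx⟩
  have hAunion : ⋃ c, A c = PrimeSpectrum.zeroLocus (I : Set R) := by
    apply subset_antisymm
    · exact Set.iUnion_subset fun c => Set.iUnion₂_subset fun p _ => hVsub p
    · intro x hx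
      haveI := x.2
      have hle : I ≤ x.asIdeal := (PrimeSpectrum.mem_zeroLocus _ _).mp hx
      obtain ⟨q, hqS, hqle⟩ := Ideal.exists_minimalPrimes_le hle
      refine Set.mem_iUnion.mpr ⟨Quotient.mk st ⟨q, hqS⟩, ?_⟩
      exact hmemA ⟨q, hqS⟩ _ rfl x ((PrimeSpectrum.mem_zeroLocus _ _).mpr hqle)
  have hsuppM : Module.support R M = PrimeSpectrum.zeroLocus (I : Set R) :=
    Module.support_eq_zeroLocus
  have hsubA : ∀ c, A c ⊆ PrimeSpectrum.zeroLocus (I : Set R) := by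
    intro c
    rw [← hAunion]
    exact Set.subset_iUnion A c
  have hdisjA : ∀ c d : Qt, c ≠ d → Disjoint (A c) (A d) := by
    intro c d hcd
    rw [Set.disjoint_left]
    rintro x hxc hxd
    obtain ⟨p, hp, hxp⟩ := Set.mem_iUnion₂.mp hxc
    obtain ⟨q, hq, hxq⟩ := Set.mem_iUnion₂.mp hxd
    exact hcd (hp ▸ hq ▸ Quotient.sound (Relation.EqvGen.rel p q ⟨x, hxp, hxq⟩))
  have hAne : ∀ c, (A c).Nonempty := by
    intro c
    obtain ⟨p, hp⟩ := Quotient.exists_rep c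
    exact ⟨pt p, hmemA p c hp _ (hmemV p)⟩
  have hAspcl : ∀ c, IsSpclClosed R (A c) := fun c =>
    SplitAux.isSpclClosed_iUnion fun p => SplitAux.isSpclClosed_iUnion fun _ =>
      SplitAux.isSpclClosed_zeroLocus p.1
  have hAclosed : ∀ c, IsClosed (A c) := by
    intro c
    have hrw : A c = ⋃ (p : {p : S // Quotient.mk st p = c}), V p.1 := by
      rw [Set.iUnion_subtype]
    rw [hrw]
    exact isClosed_iUnion_of_finite fun p => PrimeSpectrum.isClosed_zeroLocus _
  -- indecomposability of the pieces
  have hAind : ∀ c, IsIndecompSpclClosed R (A c) := by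
    intro c
    refine ⟨hAspcl c, hAne c, ?_⟩
    have hmain : ∀ B₁ B₂ : Set (PrimeSpectrum R), IsSpclClosed R B₁ → IsSpclClosed R B₂ →
        Disjoint B₁ B₂ → A c = B₁ ∪ B₂ → (∃ p₀ : S, Quotient.mk st p₀ = c ∧ V p₀ ⊆ B₁) →
        B₂ = ∅ := by
      intro B₁ B₂ hB₁ hB₂ hdis hun ⟨p₀, hp₀, hVp₀⟩
      have hdich : ∀ p : S, Quotient.mk st p = c → V p ⊆ B₁ ∨ V p ⊆ B₂ := by
        intro p hp
        have hx : pt p ∈ B₁ ∪ B₂ := by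
          rw [← hun]
          exact hmemA p c hp _ (hmemV p)
        rcases hx with hx | hx
        · exact Or.inl (SplitAux.isSpclClosed_iff.mp hB₁ _ hx)
        · exact Or.inr (SplitAux.isSpclClosed_iff.mp hB₂ _ hx)
      have hone : ∀ x y : S, (V x ∩ V y).Nonempty → Quotient.mk st y = c →
          V x ⊆ B₁ → V y ⊆ B₁ := by
        rintro x y ⟨z, hz1, hz2⟩ hyc hVx
        rcases hdich y hyc with h | h
        · exact h
        · exact absurd (h hz2) (Set.disjoint_left.mp hdis (hVx hz1))
      have hstep : ∀ p q : S, Relation.EqvGen r p q → Quotient.mk st p = c →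
          (V p ⊆ B₁ ↔ V q ⊆ B₁) := by
        intro p q h
        induction h with
        | rel x y hxy =>
          intro hxc
          have hyc : Quotient.mk st y = c := by
            rw [← hxc]
            exact (Quotient.sound (Relation.EqvGen.rel x y hxy)).symm
          exact ⟨hone x y hxy hyc, hone y x (let ⟨z, h1, h2⟩ := hxy; ⟨z, h2, h1⟩) hxc⟩
        | refl x => exact fun _ => Iff.rfl
        | symm x y hxy ih =>
          intro hyc
          have hxc : Quotient.mk st x = c := by
            rw [← hyc]
            exact Quotient.sound hxy
          exact (ih hxc).symm
        | trans x y z hxy hyz ih1 ih2 =>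
          intro hxc
          have hyc : Quotient.mk st y = c := by
            rw [← hxc]
            exact (Quotient.sound hxy).symm
          exact (ih1 hxc).trans (ih2 hyc)
      have hAB : A c ⊆ B₁ := by
        refine Set.iUnion₂_subset fun p hp => ?_
        have hEq : Relation.EqvGen r p₀ p := Quotient.exact (hp₀.trans hp.symm)
        exact (hstep p₀ p hEq hp₀).mp hVp₀
      rw [Set.eq_empty_iff_forall_notMem]
      intro x hx
      have hxA : x ∈ A c := hun ▸ Or.inr hx
      exact Set.disjoint_left.mp hdis (hAB hxA) hx
    intro B₁ B₂ hB₁ hB₂ hdis hun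
    obtain ⟨p₀, hp₀⟩ := Quotient.exists_rep c
    have hx : pt p₀ ∈ B₁ ∪ B₂ := by
      rw [← hun]
      exact hmemA p₀ c hp₀ _ (hmemV p₀)
    rcases hx with hx | hx
    · exact Or.inr (hmain B₁ B₂ hB₁ hB₂ hdis hun
        ⟨p₀, hp₀, SplitAux.isSpclClosed_iff.mp hB₁ _ hx⟩)
    · exact Or.inl (hmain B₂ B₁ hB₂ hB₁ hdis.symm (hun.trans (Set.union_comm _ _))
        ⟨p₀, hp₀, SplitAux.isSpclClosed_iff.mp hB₂ _ hx⟩)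
  -- idempotents from the clopen decomposition of `Spec (R ⧸ I)`
  let Rb := R ⧸ I
  let φ := PrimeSpectrum.comap (Ideal.Quotient.mk I)
  have hrange : Set.range φ = PrimeSpectrum.zeroLocus (I : Set R) := by
    rw [show φ = PrimeSpectrum.comap (Ideal.Quotient.mk I) from rfl,
      range_comap_of_surjective (hf := Ideal.Quotient.mk_surjective), Ideal.mk_ker]
  let Ab : Qt → Set (PrimeSpectrum Rb) := fun c => φ ⁻¹' (A c)
  have hcover : ∀ q : PrimeSpectrum Rb, ∃ c, q ∈ Ab c := by
    intro q
    have h1 : φ q ∈ ⋃ c, A c := by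
      rw [hAunion, ← hrange]
      exact Set.mem_range_self q
    obtain ⟨c, hcq⟩ := Set.mem_iUnion.mp h1
    exact ⟨c, hcq⟩
  have hclopen : ∀ c, IsClopen (Ab c) := by
    intro c
    constructor
    · exact (hAclosed c).preimage (PrimeSpectrum.continuous_comap (Ideal.Quotient.mk I))
    · have hcompl : (Ab c)ᶜ = ⋃ d ∈ {d : Qt | d ≠ c}, Ab d := by
        ext q
        simp only [Set.mem_compl_iff, Set.mem_iUnion, Set.mem_setOf_eq]
        constructor
        · intro hq
          obtain ⟨d, hd⟩ := hcover q
          exact ⟨d, fun hdc => hq (hdc ▸ hd), hd⟩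
        · rintro ⟨d, hdc, hd⟩ h
          exact Set.disjoint_left.mp (hdisjA d c hdc) hd h
      rw [← isClosed_compl_iff, hcompl]
      exact Set.Finite.isClosed_biUnion (Set.toFinite _)
        fun d _ => (hAclosed d).preimage (PrimeSpectrum.continuous_comap (Ideal.Quotient.mk I))
  have hidem : ∀ c, ∃ e : Rb, IsIdempotentElem e ∧ Ab c = ↑(PrimeSpectrum.basicOpen e) :=
    fun c => PrimeSpectrum.exists_idempotent_basicOpen_eq_of_isClopen (hclopen c)
  choose eb hebI hebA using hidem
  have hlift : ∀ c, ∃ x : R, Ideal.Quotient.mk I x = eb c :=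
    fun c => Ideal.Quotient.mk_surjective (eb c)
  choose ε hε using hlift
  -- membership translations
  have hmem_iff : ∀ (c : Qt) (q : PrimeSpectrum Rb), φ q ∈ A c ↔ ε c ∉ (φ q).asIdeal := by
    intro c q
    have h2 : q ∈ Ab c ↔ eb c ∉ q.asIdeal := by
      rw [hebA c]
      exact PrimeSpectrum.mem_basicOpen _ _
    have h3 : ε c ∈ (φ q).asIdeal ↔ eb c ∈ q.asIdeal := by
      rw [show φ = PrimeSpectrum.comap (Ideal.Quotient.mk I) from rfl,
        PrimeSpectrum.comap_asIdeal, Ideal.mem_comap, hε]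
    exact h2.trans (not_congr h3).symm
  have hrange' : ∀ p, p ∈ PrimeSpectrum.zeroLocus (I : Set R) → ∃ q, φ q = p := by
    intro p hp
    rw [← hrange] at hp
    exact hp
  have fact1 : ∀ (c : Qt) (p), p ∈ A c → ε c ∉ p.asIdeal := by
    intro c p hp
    obtain ⟨q, rfl⟩ := hrange' p (hsubA c hp)
    exact (hmem_iff c q).mp hp
  have fact2 : ∀ (c : Qt) (p), p ∈ PrimeSpectrum.zeroLocus (I : Set R) → p ∉ A c →
      ε c ∈ p.asIdeal := by
    intro c p hp hpc
    obtain ⟨q, rfl⟩ := hrange' p hp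
    by_contra h
    exact hpc ((hmem_iff c q).mpr h)
  -- ring-theoretic facts about the idempotent lifts
  have hnotmem_iff : ∀ (d : Qt) (q : PrimeSpectrum Rb), q ∉ Ab d ↔ eb d ∈ q.asIdeal := by
    intro d q
    rw [hebA d]
    constructor
    · intro h
      by_contra h2
      exact h ((PrimeSpectrum.mem_basicOpen _ _).mpr h2)
    · intro h h2
      exact (PrimeSpectrum.mem_basicOpen _ _).mp h2 h
  have horthb : ∀ c d : Qt, c ≠ d → eb c * eb d = 0 := by
    intro c d hcd
    have hnil : IsNilpotent (eb c * eb d) := by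
      rw [nilpotent_iff_mem_prime]
      intro J hJ
      set q : PrimeSpectrum Rb := ⟨J, hJ⟩
      obtain ⟨c', hc'⟩ := hcover q
      by_cases h : c = c'
      · have hd : q ∉ Ab d := by
          intro hq
          exact Set.disjoint_left.mp (hdisjA d c' (fun hdc' => hcd (by rw [h, ← hdc']))) hq hc'
        exact Ideal.mul_mem_left _ _ ((hnotmem_iff d q).mp hd)
      · have hc : q ∉ Ab c := by
          intro hq
          exact Set.disjoint_left.mp (hdisjA c c' h) hq hc'
        exact Ideal.mul_mem_right _ _ ((hnotmem_iff c q).mp hc)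
    exact ((hebI c).mul_of_commute (Commute.all _ _) (hebI d)).eq_zero_of_isNilpotent hnil
  have hsb_idem : IsIdempotentElem (∑ c, eb c) := by
    show (∑ c, eb c) * (∑ c, eb c) = ∑ c, eb c
    rw [Finset.sum_mul_sum]
    refine Finset.sum_congr rfl fun c _ => ?_
    rw [Finset.sum_eq_single_of_mem c (Finset.mem_univ c)]
    · exact hebI c
    · intro d _ hdc
      exact horthb c d (Ne.symm hdc)
  have hsb_notmem : ∀ q : PrimeSpectrum Rb, (∑ c, eb c) ∉ q.asIdeal := by
    intro q hq
    obtain ⟨c, hc⟩ := hcover q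
    have h1 : eb c ∉ q.asIdeal := by
      rw [hebA c] at hc
      exact (PrimeSpectrum.mem_basicOpen _ _).mp hc
    apply h1
    have hrest : ∑ d ∈ Finset.univ.erase c, eb d ∈ q.asIdeal := by
      refine Ideal.sum_mem _ fun d hd => ?_
      have hdc : d ≠ c := (Finset.mem_erase.mp hd).1
      refine (hnotmem_iff d q).mp fun hq' => ?_
      exact Set.disjoint_left.mp (hdisjA d c hdc) hq' hc
    have heq : eb c = (∑ d, eb d) - ∑ d ∈ Finset.univ.erase c, eb d := by
      rw [← Finset.add_sum_erase _ _ (Finset.mem_univ c)]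
      ring
    rw [heq]
    exact Ideal.sub_mem _ hq hrest
  have hsb_one : (∑ c, eb c) = 1 := by
    have h1 : IsIdempotentElem (1 - ∑ c, eb c) := hsb_idem.one_sub
    have h2 : IsNilpotent (1 - ∑ c, eb c) := by
      rw [nilpotent_iff_mem_prime]
      intro J hJ
      have h3 := hsb_notmem ⟨J, hJ⟩
      have hmul : (∑ c, eb c) * (1 - ∑ c, eb c) = 0 := by
        rw [mul_sub, mul_one, hsb_idem, sub_self]
      rcases hJ.mem_or_mem (show (∑ c, eb c) * (1 - ∑ c, eb c) ∈ J by rw [hmul]; exact J.zero_mem)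
        with h | h
      · exact absurd h h3
      · exact h
    have h3 := h1.eq_zero_of_isNilpotent h2
    rw [sub_eq_zero] at h3
    exact h3.symm
  have f_idem : ∀ c, ε c * ε c - ε c ∈ I := by
    intro c
    rw [← Ideal.Quotient.eq_zero_iff_mem, map_sub, map_mul, hε, hebI c, sub_self]
  have f_orth : ∀ c d, c ≠ d → ε c * ε d ∈ I := by
    intro c d hcd
    rw [← Ideal.Quotient.eq_zero_iff_mem, map_mul, hε, hε]
    exact horthb c d hcd
  have f_sum : (∑ c, ε c) - 1 ∈ I := by
    rw [← Ideal.Quotient.eq_zero_iff_mem, map_sub, map_one, map_sum]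
    simp_rw [hε]
    rw [hsb_one, sub_self]
  -- module-theoretic consequences
  have hannM : ∀ x ∈ I, ∀ m : M, x • m = 0 := fun x hx m => Module.mem_annihilator.mp hx m
  have hsum : ∀ m : M, (∑ c, ε c) • m = m := by
    intro m
    have := hannM _ f_sum m
    rwa [sub_smul, one_smul, sub_eq_zero] at this
  have horth : ∀ c d, c ≠ d → ∀ m : M, (ε c * ε d) • m = 0 :=
    fun c d h m => hannM _ (f_orth c d h) m
  have hidem' : ∀ c, ∀ m : M, (ε c * ε c) • m = ε c • m := by
    intro c m
    have := hannM _ (f_idem c) m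
    rwa [sub_smul, sub_eq_zero] at this
  let Nsub : Qt → Submodule R M := fun c => LinearMap.range (LinearMap.lsmul R M (ε c))
  let E : M ≃ₗ[R] ⨁ c, Nsub c := SplitAux.decompEquiv ε hsum horth hidem'
  -- supports of the pieces
  have hmul1 : ∀ c, (1 - ε c) * ε c ∈ Module.annihilator R M := by
    intro c
    rw [show (1 - ε c) * ε c = -(ε c * ε c - ε c) by ring]
    exact neg_mem (f_idem c)
  have hNsupp_sub : ∀ c, Module.support R (Nsub c) ⊆ A c := by
    intro c
    refine (SplitAux.support_range_lsmul_subset M (ε c) (1 - ε c) (hmul1 c)).trans ?_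
    rintro p ⟨hp1, hp2⟩
    rw [hsuppM, ← hAunion] at hp1
    obtain ⟨d, hd⟩ := Set.mem_iUnion.mp hp1
    by_cases hdc : d = c
    · exact hdc ▸ hd
    · exfalso
      have hpc : p ∉ A c := fun hc => Set.disjoint_left.mp (hdisjA d c hdc) hd hc
      have hεc : ε c ∈ p.asIdeal := fact2 c p (hsubA d hd) hpc
      have hone : (1 : R) ∈ p.asIdeal := by
        have := p.asIdeal.add_mem hp2 hεc
        simpa using this
      exact p.isPrime.ne_top ((Ideal.eq_top_iff_one _).mpr hone)
  have hsuppEq : Module.support R M = ⋃ c, Module.support R (Nsub c) := by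
    rw [LinearEquiv.support_eq E, SplitAux.support_directSum]
  have hNsupp : ∀ c, Module.support R (Nsub c) = A c := by
    intro c
    refine subset_antisymm (hNsupp_sub c) ?_
    intro p hp
    have hpM : p ∈ Module.support R M := by
      rw [hsuppM, ← hAunion]
      exact Set.mem_iUnion_of_mem c hp
    rw [hsuppEq] at hpM
    obtain ⟨d, hd⟩ := Set.mem_iUnion.mp hpM
    by_cases hdc : d = c
    · exact hdc ▸ hd
    · exact absurd hp (Set.disjoint_left.mp (hdisjA d c hdc) (hNsupp_sub d hd))
  -- assemble the existence part
  let n := Fintype.card Qt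
  let eQ : Fin n ≃ Qt := (Fintype.equivFin Qt).symm
  refine ⟨n, fun i => ModuleCat.of R (Nsub (eQ i)), ⟨?_⟩, ?_, ?_, ?_⟩
  · exact E.trans (DirectSum.lequivCongrLeft R (Fintype.equivFin Qt))
  · intro i j hij
    have h1 : Module.support R (Nsub (eQ i)) = A (eQ i) := hNsupp _
    have h2 : Module.support R (Nsub (eQ j)) = A (eQ j) := hNsupp _
    show Disjoint (Module.support R (Nsub (eQ i))) (Module.support R (Nsub (eQ j)))
    rw [h1, h2]
    exact hdisjA _ _ (fun h => hij (eQ.injective h))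
  · intro i
    show IsIndecompSpclClosed R (Module.support R (Nsub (eQ i)))
    rw [hNsupp]
    exact hAind _
  -- uniqueness
  intro m P hfP hPdisj hPind
  obtain ⟨f⟩ := hfP
  have hannP : ∀ k : Fin m, I ≤ Module.annihilator R (P k) := by
    intro k x hx
    rw [Module.mem_annihilator]
    intro y
    have h1 : x • (f.symm (DirectSum.lof R (Fin m) (fun k => P k) k y)) = 0 :=
      Module.mem_annihilator.mp hx _
    have h2 : x • (DirectSum.lof R (Fin m) (fun k => P k) k y) = 0 := by
      conv_lhs => rw [← LinearEquiv.apply_symm_apply f (DirectSum.lof R (Fin m) (fun k => P k) k y)]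
      rw [← map_smul, h1, map_zero]
    calc x • y = (x • DirectSum.lof R (Fin m) (fun k => P k) k y) k := by
          rw [DFinsupp.smul_apply, DirectSum.lof_apply]
      _ = 0 := by rw [h2]; rfl
  have hPsupp_union : ⋃ j, Module.support R (P j) = ⋃ c, A c := by
    rw [← SplitAux.support_directSum (fun j : Fin m => (P j : Type u)),
      ← LinearEquiv.support_eq f, hsuppM, hAunion]
  obtain ⟨σ', hσ'⟩ := SplitAux.ks_unique (fun i : Fin n => A (eQ i))
    (fun j : Fin m => Module.support R (P j))
    (fun i => hAind _) hPind
    (fun i j hij => hdisjA _ _ (fun h => hij (eQ.injective h)))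
    (fun i j hij => hPdisj i j hij)
    (by rw [hPsupp_union, Function.Surjective.iUnion_comp eQ.surjective])
  refine ⟨σ', fun i => ⟨?_⟩⟩
  set c := eQ i with hc
  set j := σ' i with hj
  have hsuppj : Module.support R (P j) = A c := (hσ' i).symm
  -- `ε c` acts as the identity on `P j`
  have hactj : ∀ y : (P j : Type u), ε c • y = y := by
    intro y
    have h1 : (1 - ε c) • y = 0 := by
      refine SplitAux.smul_eq_zero_of (P j) (ε c) (1 - ε c) ?_ ?_ y
      · refine hannP j ?_
        rw [show ε c * (1 - ε c) = -(ε c * ε c - ε c) by ring]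
        exact neg_mem (f_idem c)
      · intro p hp
        rw [hsuppj] at hp
        exact fact1 c p hp
    rw [sub_smul, one_smul, sub_eq_zero] at h1
    exact h1.symm
  -- `ε c` acts as zero on `P k` for `k ≠ j`
  have hactk : ∀ k, k ≠ j → ∀ y : (P k : Type u), ε c • y = 0 := by
    intro k hkj y
    refine SplitAux.smul_eq_zero_of (P k) (1 - ε c) (ε c) ?_ ?_ y
    · refine hannP k ?_
      rw [show (1 - ε c) * ε c = -(ε c * ε c - ε c) by ring]
      exact neg_mem (f_idem c)
    · intro p hp
      have hk' : Module.support R (P k) = A (eQ (σ'.symm k)) := by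
        have := hσ' (σ'.symm k)
        rw [Equiv.apply_symm_apply] at this
        exact this.symm
      rw [hk'] at hp
      have hcc' : eQ (σ'.symm k) ≠ c := by
        intro h
        apply hkj
        have h4 : σ'.symm k = i := eQ.injective (h.trans hc)
        rw [hj, ← h4, Equiv.apply_symm_apply]
      have hpc : p ∉ A c := fun hpc => Set.disjoint_left.mp (hdisjA _ c hcc') hp hpc
      have hεc : ε c ∈ p.asIdeal := fact2 c p (hsubA _ hp) hpc
      intro hone
      have : (1 : R) ∈ p.asIdeal := by
        have := p.asIdeal.add_mem hone hεc
        simpa using this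
      exact p.isPrime.ne_top ((Ideal.eq_top_iff_one _).mpr this)
  -- transport the summand across `f`
  have e2 : Submodule.map (f : M →ₗ[R] ⨁ k, P k) (Nsub c) =
      LinearMap.range (LinearMap.lsmul R (⨁ k, (P k : Type u)) (ε c)) :=
    SplitAux.map_range_lsmul f (ε c)
  have e3 : LinearMap.range (LinearMap.lsmul R (⨁ k, (P k : Type u)) (ε c)) =
      LinearMap.range (DirectSum.lof R (Fin m) (fun k => (P k : Type u)) j) :=
    SplitAux.range_lsmul_directSum (fun k => (P k : Type u)) (ε c) j hactj hactk
  have hlofinj : Function.Injective (DirectSum.lof R (Fin m) (fun k => (P k : Type u)) j) := by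
    intro a b hab
    have := congrArg (DirectSum.component R (Fin m) (fun k => (P k : Type u)) j) hab
    simpa [DirectSum.component.lof_self] using this
  exact ((f.submoduleMap (Nsub c)).trans
    (LinearEquiv.ofEq _ _ (e2.trans e3))).trans
    (LinearEquiv.ofInjective (DirectSum.lof R (Fin m) (fun k => (P k : Type u)) j) hlofinj).symm
end
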